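/- arXiv:2402.13198 — 5 statements merged into one kernel-verified Lean document; each statement's English description precedes it below -/
import Mathlib

section
/- For every ε > 0 there exists x₀ such that for all real x ≥ x₀ and all real y with x < y ≤ x², setting u := log x / log y (so u ∈ [1/2, 1)), one has #{n ∈ ℕ : 1 ≤ n ≤ x, P⁺(n²+1) ≤ y} ≥ (1 − u − ε)·x. -/
set_option maxHeartbeats 1000000

attribute [local instance] Classical.propDecidable

/-- Largest prime factor, with the convention `Pplus 1 = 1`. -/
def Pplus (n : ℕ) : ℕ := max 1 (n.primeFactors.sup id)

noncomputable section
namespace Friable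
open Finset ArithmeticFunction

/-- The nontrivial character mod 4, as a real-valued function. -/
def chi (n : ℕ) : ℝ := if n % 4 = 1 then 1 else if n % 4 = 3 then -1 else 0

lemma chi_mul (a b : ℕ) : chi (a * b) = chi a * chi b := by
  have h : a * b % 4 = (a % 4) * (b % 4) % 4 := Nat.mul_mod a b 4
  have ha : a % 4 = 0 ∨ a % 4 = 1 ∨ a % 4 = 2 ∨ a % 4 = 3 := by omega
  have hb : b % 4 = 0 ∨ b % 4 = 1 ∨ b % 4 = 2 ∨ b % 4 = 3 := by omega
  unfold chi
  rcases ha with h1 | h1 | h1 | h1 <;> rcases hb with h2 | h2 | h2 | h2 <;>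
    rw [h, h1, h2] <;> norm_num

lemma abs_chi_le (n : ℕ) : |chi n| ≤ 1 := by
  unfold chi; split_ifs <;> norm_num

/-- Partial sums of `chi` over `Ioc 0 M`. -/
def Cs (M : ℕ) : ℝ := ∑ m ∈ Ioc 0 M, chi m

lemma Cs_eq (M : ℕ) : Cs M = if M % 4 = 1 ∨ M % 4 = 2 then 1 else 0 := by
  induction M with
  | zero => simp [Cs]
  | succ M ih =>
    have : Cs (M + 1) = Cs M + chi (M + 1) := by
      rw [Cs, Cs, sum_Ioc_succ_top (Nat.zero_le _)]
    rw [this, ih]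
    have h : (M + 1) % 4 = (M % 4 + 1) % 4 := by omega
    have ha : M % 4 = 0 ∨ M % 4 = 1 ∨ M % 4 = 2 ∨ M % 4 = 3 := by omega
    unfold chi
    rcases ha with h1 | h1 | h1 | h1 <;> rw [h, h1] <;> norm_num

lemma Cs_nonneg (M : ℕ) : 0 ≤ Cs M := by rw [Cs_eq]; split_ifs <;> norm_num

lemma Cs_le_one (M : ℕ) : Cs M ≤ 1 := by rw [Cs_eq]; split_ifs <;> norm_num

lemma chi_eq_Cs (m : ℕ) : chi (m + 1) = Cs (m + 1) - Cs m := by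
  have : Cs (m + 1) = Cs m + chi (m + 1) := by
    rw [Cs, Cs, sum_Ioc_succ_top (Nat.zero_le _)]
  linarith

/-- telescoping sum over `Ioc a b`. -/
lemma telescope (g : ℕ → ℝ) {a b : ℕ} (hab : a ≤ b) :
    ∑ m ∈ Ioc a b, (g m - g (m + 1)) = g (a + 1) - g (b + 1) := by
  induction b, hab using Nat.le_induction with
  | base => simp
  | succ b hab ih => rw [sum_Ioc_succ_top hab, ih]; ring

/-- Abel summation bound for sums `∑ chi m * f m` with `f` nonneg and antitone. -/
lemma abel_bound (f : ℕ → ℝ) (a b : ℕ)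
    (hf0 : ∀ m, a + 1 ≤ m → 0 ≤ f m) (hfa : ∀ m, a + 1 ≤ m → f (m + 1) ≤ f m) :
    |∑ m ∈ Ioc a b, chi m * f m| ≤ f (a + 1) := by
  rcases le_or_gt b a with h | h
  · rw [Ioc_eq_empty (by omega)]
    simpa using hf0 (a + 1) le_rfl
  -- identity : S = T + Cs b * f (b+1) - Cs a * f (a+1)
  have key : ∀ c, a ≤ c → ∑ m ∈ Ioc a c, chi m * f m
      = (∑ m ∈ Ioc a c, Cs m * (f m - f (m + 1))) + Cs c * f (c + 1) - Cs a * f (a + 1) := by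
    intro c hc
    induction c, hc using Nat.le_induction with
    | base => simp
    | succ c hc ih =>
      rw [sum_Ioc_succ_top hc, ih, sum_Ioc_succ_top hc, chi_eq_Cs]
      ring
  rw [key b h.le]
  have hT0 : 0 ≤ ∑ m ∈ Ioc a b, Cs m * (f m - f (m + 1)) := by
    apply sum_nonneg
    intro m hm
    rw [mem_Ioc] at hm
    have h1 := hfa m (by omega)
    exact mul_nonneg (Cs_nonneg m) (by linarith)
  have hT1 : ∑ m ∈ Ioc a b, Cs m * (f m - f (m + 1)) ≤ f (a + 1) - f (b + 1) := by
    calc ∑ m ∈ Ioc a b, Cs m * (f m - f (m + 1)) ≤ ∑ m ∈ Ioc a b, (f m - f (m + 1)) := by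
          apply sum_le_sum
          intro m hm
          rw [mem_Ioc] at hm
          have h1 := hfa m (by omega)
          nlinarith [Cs_le_one m, Cs_nonneg m]
      _ = f (a + 1) - f (b + 1) := telescope f h.le
  have hb0 : 0 ≤ f (b + 1) := hf0 _ (by omega)
  have hb1 : 0 ≤ f (a + 1) := hf0 _ le_rfl
  have hCb0 := Cs_nonneg b
  have hCb1 := Cs_le_one b
  have hCa0 := Cs_nonneg a
  have hCa1 := Cs_le_one a
  rw [abs_le]
  constructor <;> nlinarith

lemma chi_def (n : ℕ) : chi n = if n % 4 = 1 then 1 else if n % 4 = 3 then -1 else 0 := rfl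

/-- Partial sums of `chi m / m`. -/
def LN (M : ℕ) : ℝ := ∑ m ∈ Ioc 0 M, chi m / m

lemma LN_chunk {a b : ℕ} (ha : 1 ≤ a) (hab : a ≤ b) : |LN b - LN a| ≤ 1 / (a + 1) := by
  have : LN b - LN a = ∑ m ∈ Ioc a b, chi m / m := by
    rw [LN, LN, ← sum_Ioc_consecutive _ (Nat.zero_le a) hab]
    ring
  rw [this]
  have := abel_bound (fun m => 1 / (m : ℝ)) a b
    (fun m hm => by positivity)
    (fun m hm => by
      have h2 : (0:ℝ) < m := by exact_mod_cast (by omega : 0 < m)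
      apply one_div_le_one_div_of_le h2
      exact_mod_cast Nat.le_succ m)
  simp only [div_eq_mul_one_div (chi _)] at this ⊢
  convert this using 3
  norm_num

lemma LN_four : LN 4 = 2 / 3 := by
  rw [LN]
  have : Ioc 0 4 = {1, 2, 3, 4} := by decide
  rw [this]
  simp [chi_def]
  norm_num

lemma LN_lower {M : ℕ} (hM : 1 ≤ M) : 2 / 5 ≤ LN M := by
  rcases le_or_gt 4 M with h | h
  · have h1 := LN_chunk (by norm_num : (1:ℕ) ≤ 4) h
    rw [LN_four] at h1
    rw [abs_le] at h1
    norm_num at h1 ⊢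
    linarith [h1.1]
  · interval_cases M <;> rw [LN] <;> norm_num [chi_def] <;> norm_num [show Ioc 0 1 = {1} by decide, show Ioc 0 2 = {1,2} by decide, show Ioc 0 3 = {1,2,3} by decide, chi_def] <;> norm_num

/-- log is eventually `1/m`-Lipschitz-ish : `log (m+1) ≤ log m + 1/m`. -/
lemma log_succ_le (m : ℕ) (hm : 1 ≤ m) : Real.log (m + 1) ≤ Real.log m + 1 / m := by
  have hm0 : (0:ℝ) < m := by exact_mod_cast hm
  have h1 : Real.log ((m + 1) / m) ≤ (m + 1) / m - 1 :=
    Real.log_le_sub_one_of_pos (by positivity)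
  rw [Real.log_div (by positivity) (by positivity)] at h1
  have : ((m:ℝ) + 1) / m - 1 = 1 / m := by field_simp; ring
  linarith [this ▸ h1]

lemma one_le_log_three : (1:ℝ) ≤ Real.log 3 := by
  have h := Real.exp_one_lt_d9
  have : Real.exp 1 ≤ 3 := by linarith
  calc (1:ℝ) = Real.log (Real.exp 1) := by rw [Real.log_exp]
    _ ≤ Real.log 3 := Real.log_le_log (Real.exp_pos 1) this

/-- `log m / m` is antitone for `m ≥ 3`. -/
lemma log_div_antitone {m : ℕ} (hm : 3 ≤ m) :
    Real.log (m + 1) / (m + 1) ≤ Real.log m / m := by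
  have hm0 : (0:ℝ) < m := by exact_mod_cast (by omega : 0 < m)
  have h1 : (1:ℝ) ≤ Real.log m := by
    calc (1:ℝ) ≤ Real.log 3 := one_le_log_three
      _ ≤ Real.log m := Real.log_le_log (by norm_num) (by exact_mod_cast hm)
  have h2 := log_succ_le m (by omega)
  rw [div_le_div_iff₀ (by positivity) hm0]
  have : Real.log (↑m + 1) * ↑m ≤ (Real.log m + 1 / m) * m := by nlinarith
  rw [add_mul, div_mul_cancel₀ _ (ne_of_gt hm0)] at this
  nlinarith

lemma log_div_nonneg {m : ℕ} (hm : 1 ≤ m) : 0 ≤ Real.log m / m := by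
  have : (1:ℝ) ≤ m := by exact_mod_cast hm
  have := Real.log_nonneg this
  positivity

/-- Bound on `∑ chi n * log n / n`. -/
lemma B_bound (N : ℕ) : |∑ n ∈ Ioc 0 N, chi n * (Real.log n / n)| ≤ 2 := by
  rcases le_or_gt N 3 with h | h
  · have : ∀ n ∈ Ioc 0 N, |chi n * (Real.log n / n)| ≤ Real.log 3 / 3 := by
      intro n hn
      rw [mem_Ioc] at hn
      rw [abs_mul]
      have h1 : |Real.log n / n| = Real.log n / n := abs_of_nonneg (log_div_nonneg (by omega))
      have h2 : Real.log n / n ≤ Real.log 3 / 3 := by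
        have hn3 : n ≤ 3 := by omega
        have hn1 : 1 ≤ n := by omega
        have hl3 : (0:ℝ) ≤ Real.log 3 := Real.log_nonneg (by norm_num)
        interval_cases n
        · simp
          positivity
        · have h8 : Real.log 8 = 3 * Real.log 2 := by
            rw [show (8:ℝ) = 2^3 by norm_num, Real.log_pow]; norm_num
          have h9 : Real.log 9 = 2 * Real.log 3 := by
            rw [show (9:ℝ) = 3^2 by norm_num, Real.log_pow]; norm_num
          have h89 : Real.log 8 ≤ Real.log 9 := Real.log_le_log (by norm_num) (by norm_num)
          rw [div_le_div_iff₀ (by norm_num) (by norm_num)]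
          push_cast
          nlinarith
        · push_cast
          exact le_rfl
      calc |chi n| * |Real.log n / n| ≤ 1 * (Real.log n / n) := by
            rw [h1]; exact mul_le_mul_of_nonneg_right (abs_chi_le n) (log_div_nonneg (by omega))
        _ ≤ Real.log 3 / 3 := by rw [one_mul]; exact h2
    calc |∑ n ∈ Ioc 0 N, chi n * (Real.log n / n)| ≤ ∑ n ∈ Ioc 0 N, |chi n * (Real.log n / n)| :=
          abs_sum_le_sum_abs _ _
      _ ≤ ∑ _n ∈ Ioc 0 N, Real.log 3 / 3 := sum_le_sum this
      _ ≤ 3 * (Real.log 3 / 3) := by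
          rw [sum_const, Nat.card_Ioc]
          have : (N - 0 : ℕ) ≤ 3 := by omega
          have h3 : (0:ℝ) ≤ Real.log 3 / 3 := by
            have := Real.log_nonneg (by norm_num : (1:ℝ) ≤ 3); positivity
          calc (N - 0 : ℕ) • (Real.log 3 / 3) = ((N - 0 : ℕ) : ℝ) * (Real.log 3 / 3) := by
                rw [nsmul_eq_mul]
            _ ≤ 3 * (Real.log 3 / 3) := by
                apply mul_le_mul_of_nonneg_right _ h3
                exact_mod_cast this
      _ = Real.log 3 := by ring
      _ ≤ 2 := by
          have := Real.log_le_sub_one_of_pos (by norm_num : (0:ℝ) < 3)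
          linarith
  · have hsplit : ∑ n ∈ Ioc 0 N, chi n * (Real.log n / n)
        = (∑ n ∈ Ioc 0 3, chi n * (Real.log n / n)) + ∑ n ∈ Ioc 3 N, chi n * (Real.log n / n) := by
      rw [sum_Ioc_consecutive _ (by omega) (by omega)]
    rw [hsplit]
    have h1 : ∑ n ∈ Ioc 0 3, chi n * (Real.log n / n) = -(Real.log 3 / 3) := by
      have : Ioc 0 3 = ({1, 2, 3} : Finset ℕ) := by decide
      rw [this]
      simp [chi_def]
    have h2 := abel_bound (fun m => Real.log m / m) 3 N
      (fun m hm => log_div_nonneg (by omega))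
      (fun m hm => by exact_mod_cast log_div_antitone (by omega : 3 ≤ m))
    rw [h1]
    have h3 : Real.log 3 / 3 ≤ 2 / 3 := by
      have := Real.log_le_sub_one_of_pos (by norm_num : (0:ℝ) < 3); linarith
    have h4 : Real.log 4 / 4 ≤ 3 / 4 := by
      have := Real.log_le_sub_one_of_pos (by norm_num : (0:ℝ) < 4); linarith
    have h5 : |∑ n ∈ Ioc 3 N, chi n * (Real.log ↑n / ↑n)| ≤ Real.log 4 / 4 := by
      convert h2 using 3 <;> norm_num
    rw [abs_le] at h5 ⊢
    have h6 : (0:ℝ) ≤ Real.log 3 / 3 := by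
      have := Real.log_nonneg (by norm_num : (1:ℝ) ≤ 3); positivity
    constructor <;> nlinarith [h5.1, h5.2]

/-- Reindexing a double sum over `n ≤ N` and divisor pairs of `n`. -/
lemma sum_Icc_antidiag (N : ℕ) (F : ℕ → ℕ → ℝ) :
    ∑ n ∈ Ioc 0 N, ∑ p ∈ n.divisorsAntidiagonal, F p.1 p.2
      = ∑ d ∈ Ioc 0 N, ∑ m ∈ Ioc 0 (N / d), F d m := by
  rw [Finset.sum_sigma', Finset.sum_sigma']
  apply Finset.sum_nbij' (i := fun x => (⟨x.2.1, x.2.2⟩ : (_ : ℕ) × ℕ))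
    (j := fun x => (⟨x.1 * x.2, (x.1, x.2)⟩ : (_ : ℕ) × ℕ × ℕ))
  · rintro ⟨n, d, m⟩ h
    simp only [mem_sigma, mem_Ioc, Nat.mem_divisorsAntidiagonal] at h ⊢
    obtain ⟨⟨hn0, hnN⟩, hdm, hn⟩ := h
    have hd0 : 0 < d := Nat.pos_of_ne_zero (by rintro rfl; simp at hdm; omega)
    have hm0 : 0 < m := Nat.pos_of_ne_zero (by rintro rfl; simp at hdm; omega)
    refine ⟨⟨hd0, ?_⟩, hm0, ?_⟩
    · calc d ≤ d * m := Nat.le_mul_of_pos_right _ hm0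
        _ ≤ N := by omega
    · exact Nat.le_div_iff_mul_le hd0 |>.mpr (by rw [mul_comm]; omega)
  · rintro ⟨d, m⟩ h
    simp only [mem_sigma, mem_Ioc, Nat.mem_divisorsAntidiagonal] at h ⊢
    obtain ⟨⟨hd0, hdN⟩, hm0, hm⟩ := h
    have h2 := (Nat.le_div_iff_mul_le hd0).mp hm
    have h3 : d * m ≤ N := by rw [mul_comm]; exact h2
    exact ⟨⟨by positivity, h3⟩, trivial, Nat.mul_ne_zero (by omega) (by omega)⟩
  · rintro ⟨n, d, m⟩ h
    simp only [mem_sigma, mem_Ioc, Nat.mem_divisorsAntidiagonal] at h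
    obtain ⟨_, hdm, _⟩ := h
    simp only []
    congr 1 <;> simp [hdm]
  · rintro ⟨d, m⟩ h
    rfl
  · rintro ⟨n, d, m⟩ h
    rfl

/-- `∑_{n ≤ N} log n ≥ N log N - N`. -/
lemma sum_log_lower (N : ℕ) :
    (N : ℝ) * Real.log N - N ≤ ∑ n ∈ Ioc 0 N, Real.log n := by
  induction N with
  | zero => simp
  | succ N ih =>
    rw [sum_Ioc_succ_top (Nat.zero_le _)]
    rcases Nat.eq_zero_or_pos N with h | h
    · subst h; simp
    have hN : (1:ℝ) ≤ N := by exact_mod_cast h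
    have key : ((N:ℝ) + 1) * Real.log (N + 1) - (N + 1) ≤ (N * Real.log N - N) + Real.log (N + 1) := by
      have h1 : Real.log ((N:ℝ) + 1) ≤ Real.log N + 1 / N := by
        have h2 : Real.log (((N:ℝ) + 1) / N) ≤ ((N:ℝ) + 1) / N - 1 :=
          Real.log_le_sub_one_of_pos (by positivity)
        rw [Real.log_div (by positivity) (by positivity)] at h2
        have : ((N:ℝ) + 1) / N - 1 = 1 / N := by field_simp; ring
        linarith [this ▸ h2]
      have h3 : (N:ℝ) * Real.log (N + 1) ≤ N * Real.log N + 1 := by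
        have := mul_le_mul_of_nonneg_left h1 (by positivity : (0:ℝ) ≤ N)
        rw [mul_add, mul_one_div, div_self (by positivity)] at this
        linarith
      push_cast
      nlinarith
    push_cast at key ⊢
    linarith

/-- Chebyshev: `θ(N) = ∑_{p ≤ N} log p ≤ N log 4`. -/
lemma theta_bound (N : ℕ) :
    ∑ p ∈ (Ioc 0 N).filter Nat.Prime, Real.log p ≤ N * Real.log 4 := by
  have hset : (Ioc 0 N).filter Nat.Prime = (range (N+1)).filter Nat.Prime := by
    ext p
    simp only [mem_filter, mem_Ioc, mem_range]
    constructor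
    · rintro ⟨⟨_, h2⟩, hp⟩; exact ⟨by omega, hp⟩
    · rintro ⟨h1, hp⟩; exact ⟨⟨hp.pos, by omega⟩, hp⟩
  rw [hset]
  have h1 : Real.log (primorial N) ≤ Real.log ((4:ℕ) ^ N) :=
    Real.log_le_log (by exact_mod_cast (primorial_pos N)) (by exact_mod_cast primorial_le_4_pow N)
  rw [primorial] at h1
  rw [Nat.cast_prod] at h1
  rw [Real.log_prod (fun p hp => by
    simp only [mem_filter] at hp
    exact_mod_cast hp.2.pos.ne')] at h1
  rw [Real.log_pow] at h1
  have h4 : ((4:ℕ):ℝ) = (4:ℝ) := by norm_num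
  rw [h4] at h1
  simpa using h1
/-- `∑_{2 ≤ m ≤ N} 1/(m √m) ≤ 2`. -/
lemma sum_inv_msqrt (N : ℕ) : ∑ m ∈ Ioc 1 N, 1 / ((m:ℝ) * Real.sqrt m) ≤ 2 := by
  rcases le_or_gt N 1 with h | h
  · rw [Ioc_eq_empty (by omega)]; norm_num
  have key : ∀ m ∈ Ioc 1 N, 1 / ((m:ℝ) * Real.sqrt m)
      ≤ 2 * ((fun m : ℕ => 1 / Real.sqrt (m - 1 : ℕ)) m - (fun m : ℕ => 1 / Real.sqrt (m - 1 : ℕ)) (m + 1)) := by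
    intro m hm
    rw [mem_Ioc] at hm
    simp only
    have h1 : (m + 1 - 1 : ℕ) = m := by omega
    rw [h1]
    set a := Real.sqrt (m - 1 : ℕ) with ha
    set b := Real.sqrt m with hb
    have hm2 : (2:ℝ) ≤ m := by exact_mod_cast hm.1
    have ha2 : a ^ 2 = (m - 1 : ℕ) := Real.sq_sqrt (by positivity)
    have hb2 : b ^ 2 = m := Real.sq_sqrt (by positivity)
    have hcast : ((m - 1 : ℕ) : ℝ) = (m : ℝ) - 1 := by
      have : 1 ≤ m := by omega
      push_cast [this]; ring
    rw [hcast] at ha2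
    have ha0 : 1 ≤ a := by rw [ha, Real.one_le_sqrt, hcast]; linarith
    have hb0 : 0 < b := by rw [hb]; exact Real.sqrt_pos.mpr (by linarith)
    have hab : a ≤ b := by
      rw [ha, hb]; exact Real.sqrt_le_sqrt (by rw [hcast]; linarith)
    have e2 : (b - a) * (a + b) = 1 := by nlinarith
    have hsum : (0:ℝ) < a + b := by linarith
    have t2 : a * b ≤ b * b := mul_le_mul_of_nonneg_right hab hb0.le
    have hL : a * b * (a + b) ≤ 2 * b ^ 3 := by nlinarith
    have key3 : a * b ≤ 2 * (b - a) * (b ^ 2 * b) := by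
      have h5 : 2 * (b - a) * (b ^ 2 * b) * (a + b) = 2 * b ^ 3 * ((b - a) * (a + b)) := by ring
      rw [e2, mul_one] at h5
      exact le_of_mul_le_mul_right (hL.trans_eq h5.symm) hsum
    have hden : (0:ℝ) < a * b := by positivity
    have hmb : (m:ℝ) = b ^ 2 := hb2.symm
    have e1 : (1/a - 1/b) = (b - a) / (a * b) := by field_simp
    rw [div_le_iff₀ (by positivity : (0:ℝ) < (m:ℝ) * b), e1]
    have expand : 2 * ((b - a) / (a * b)) * ((m:ℝ) * b) = 2 * (b - a) * (b ^ 2 * b) / (a * b) := by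
      rw [hmb]; field_simp
    rw [expand, le_div_iff₀ hden, one_mul]
    exact key3
  calc ∑ m ∈ Ioc 1 N, 1 / ((m:ℝ) * Real.sqrt m)
      ≤ ∑ m ∈ Ioc 1 N, 2 * ((fun m : ℕ => 1 / Real.sqrt (m - 1 : ℕ)) m - (fun m : ℕ => 1 / Real.sqrt (m - 1 : ℕ)) (m + 1)) :=
        sum_le_sum key
    _ = 2 * ((fun m : ℕ => 1 / Real.sqrt (m - 1 : ℕ)) 2 - (fun m : ℕ => 1 / Real.sqrt (m - 1 : ℕ)) (N + 1)) := by
        rw [← mul_sum, telescope _ h.le]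
    _ ≤ 2 := by
        simp only
        have h1n : (0:ℝ) ≤ 1 / Real.sqrt ((N + 1 - 1 : ℕ)) := by positivity
        have h2 : ((2 - 1 : ℕ) : ℝ) = 1 := by norm_num
        rw [h2, Real.sqrt_one]
        linarith

lemma log_le_two_sqrt {m : ℕ} (hm : 1 ≤ m) : Real.log m ≤ 2 * Real.sqrt m := by
  have h0 : (1:ℝ) ≤ m := by exact_mod_cast hm
  have h1 : Real.log m = 2 * Real.log (Real.sqrt m) := by
    rw [Real.log_sqrt (by positivity)]; ring
  have h2 : Real.log (Real.sqrt m) ≤ Real.sqrt m - 1 :=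
    Real.log_le_sub_one_of_pos (Real.sqrt_pos.mpr (by linarith))
  have h3 : (0:ℝ) ≤ Real.sqrt m := Real.sqrt_nonneg _
  linarith

/-- `∑_{2 ≤ m ≤ N} log m / m² ≤ 4`. -/
lemma sum_log_div_sq (N : ℕ) : ∑ m ∈ Ioc 1 N, Real.log m / (m:ℝ) ^ 2 ≤ 4 := by
  calc ∑ m ∈ Ioc 1 N, Real.log m / (m:ℝ) ^ 2
      ≤ ∑ m ∈ Ioc 1 N, 2 * (1 / ((m:ℝ) * Real.sqrt m)) := by
        apply sum_le_sum
        intro m hm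
        rw [mem_Ioc] at hm
        have hm1 : (1:ℝ) ≤ m := by exact_mod_cast (by omega : 1 ≤ m)
        have h1 := log_le_two_sqrt (show 1 ≤ m by omega)
        have hs : Real.sqrt m * Real.sqrt m = m := Real.mul_self_sqrt (by positivity)
        have hs0 : 0 < Real.sqrt m := Real.sqrt_pos.mpr (by linarith)
        rw [div_le_iff₀ (by positivity)]
        have expand : 2 * (1 / ((m:ℝ) * Real.sqrt m)) * (m:ℝ)^2 = 2 * Real.sqrt m := by
          field_simp
          nlinarith
        rw [expand]
        linarith
    _ = 2 * ∑ m ∈ Ioc 1 N, 1 / ((m:ℝ) * Real.sqrt m) := by rw [mul_sum]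
    _ ≤ 2 * 2 := by linarith [sum_inv_msqrt N]
    _ = 4 := by norm_num

/-- Decomposition of non-prime prime powers. -/
lemma nonprime_pp_mem {n N : ℕ} (hn0 : 0 < n) (hnN : n ≤ N) (hnp : ¬ n.Prime)
    (hpp : IsPrimePow n) :
    ∃ m ∈ Icc 2 N.sqrt, n = m ^ 2 ∨ n = m.minFac * m ^ 2 := by
  obtain ⟨p, k, hp, hk, rfl⟩ := hpp
  rw [← Nat.prime_iff] at hp
  have hp2 : 2 ≤ p := hp.two_le
  have hk2 : 2 ≤ k := by
    by_contra hcon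
    have hk1 : k = 1 := by omega
    subst hk1
    exact hnp (by simpa using hp)
  rcases Nat.even_or_odd k with ⟨j, hj⟩ | ⟨j, hj⟩
  · refine ⟨p ^ j, ?_, Or.inl (by rw [← pow_mul]; congr 1; omega)⟩
    rw [mem_Icc]
    constructor
    · calc 2 ≤ p := hp2
        _ ≤ p ^ j := Nat.le_self_pow (by omega) p
    · rw [Nat.le_sqrt]
      calc p ^ j * p ^ j = p ^ k := by rw [← pow_add]; congr 1; omega
        _ ≤ N := hnN
  · have hj1 : 1 ≤ j := by omega
    have hmf : (p ^ j).minFac = p := by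
      have hd : (p ^ j).minFac ∣ p ^ j := Nat.minFac_dvd _
      have hppj : p ^ j ≠ 1 := Nat.one_lt_pow (by omega) (by omega) |>.ne'
      have hpr : ((p ^ j).minFac).Prime := Nat.minFac_prime hppj
      have := hpr.dvd_of_dvd_pow hd
      exact (Nat.prime_dvd_prime_iff_eq hpr hp).mp this
    refine ⟨p ^ j, ?_, Or.inr (by rw [hmf, ← pow_mul, ← pow_succ']; congr 1; omega)⟩
    rw [mem_Icc]
    constructor
    · calc 2 ≤ p := hp2
        _ ≤ p ^ j := Nat.le_self_pow (by omega) p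
    · rw [Nat.le_sqrt]
      calc p ^ j * p ^ j = p ^ (2 * j) := by rw [← pow_add]; congr 1; omega
        _ ≤ p ^ k := Nat.pow_le_pow_right (by omega) (by omega)
        _ ≤ N := hnN

lemma sq_inj : Function.Injective (fun m : ℕ => m ^ 2) :=
  Nat.pow_left_injective (by norm_num)

lemma pm2_injOn {s : ℕ} : Set.InjOn (fun m : ℕ => m.minFac * m ^ 2) ((Icc 2 s : Finset ℕ) : Set ℕ) := by
  intro a ha b hb h
  simp only [Finset.coe_Icc, Set.mem_Icc] at ha hb
  simp only at h
  have hpa : a.minFac.Prime := Nat.minFac_prime (by omega)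
  have hpb : b.minFac.Prime := Nat.minFac_prime (by omega)
  by_contra hne
  -- wlog via trichotomy on minFac
  rcases lt_trichotomy a.minFac b.minFac with hlt | heq | hlt
  · -- a.minFac < b.minFac : a.minFac divides b.minFac * b^2
    have hdvd : a.minFac ∣ b.minFac * b ^ 2 := ⟨a ^ 2, by omega⟩
    have : a.minFac ∣ b ^ 2 := by
      rcases (Nat.Prime.dvd_mul hpa).mp hdvd with h' | h'
      · exact absurd ((Nat.prime_dvd_prime_iff_eq hpa hpb).mp h') (by omega)
      · exact h'
    have hab : a.minFac ∣ b := hpa.dvd_of_dvd_pow this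
    have := Nat.minFac_le_of_dvd hpa.two_le hab
    omega
  · have : a ^ 2 = b ^ 2 := by
      have h0 : 0 < a.minFac := hpa.pos
      rw [heq] at h
      exact Nat.eq_of_mul_eq_mul_left (by omega) h
    exact hne (Nat.pow_left_injective (by norm_num) this)
  · have hdvd : b.minFac ∣ a.minFac * a ^ 2 := ⟨b ^ 2, by omega⟩
    have : b.minFac ∣ a ^ 2 := by
      rcases (Nat.Prime.dvd_mul hpb).mp hdvd with h' | h'
      · exact absurd ((Nat.prime_dvd_prime_iff_eq hpb hpa).mp h') (by omega)
      · exact h'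
    have hab : b.minFac ∣ a := hpb.dvd_of_dvd_pow this
    have := Nat.minFac_le_of_dvd hpb.two_le hab
    omega

/-- Generic bound on sums over non-prime `n` of nonneg `g` vanishing off prime powers. -/
lemma sum_nonprime_le (N : ℕ) (g : ℕ → ℝ) (hg0 : ∀ n, 0 ≤ g n)
    (hgpp : ∀ n, ¬ IsPrimePow n → g n = 0) :
    ∑ n ∈ (Ioc 0 N).filter (fun n => ¬ n.Prime), g n
      ≤ (∑ m ∈ Icc 2 N.sqrt, g (m ^ 2)) + ∑ m ∈ Icc 2 N.sqrt, g (m.minFac * m ^ 2) := by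
  classical
  set A₁ := (Icc 2 N.sqrt).image (fun m => m ^ 2) with hA₁
  set A₂ := (Icc 2 N.sqrt).image (fun m => m.minFac * m ^ 2) with hA₂
  have hsub : ((Ioc 0 N).filter (fun n => ¬ n.Prime)).filter IsPrimePow ⊆ A₁ ∪ A₂ := by
    intro n hn
    simp only [mem_filter, mem_Ioc] at hn
    obtain ⟨⟨⟨hn0, hnN⟩, hnp⟩, hpp⟩ := hn
    obtain ⟨m, hm, hcase⟩ := nonprime_pp_mem hn0 hnN hnp hpp
    rcases hcase with h | h
    · exact mem_union_left _ (mem_image.mpr ⟨m, hm, h.symm⟩)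
    · exact mem_union_right _ (mem_image.mpr ⟨m, hm, h.symm⟩)
  calc ∑ n ∈ (Ioc 0 N).filter (fun n => ¬ n.Prime), g n
      = ∑ n ∈ ((Ioc 0 N).filter (fun n => ¬ n.Prime)).filter IsPrimePow, g n :=
        (sum_filter_of_ne (fun n _ hgn => by
          by_contra h
          exact hgn (hgpp n h))).symm
    _ ≤ ∑ n ∈ A₁ ∪ A₂, g n := sum_le_sum_of_subset_of_nonneg hsub (fun n _ _ => hg0 n)
    _ ≤ (∑ n ∈ A₁, g n) + ∑ n ∈ A₂, g n := by
        have := sum_union_inter (s₁ := A₁) (s₂ := A₂) (f := g)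
        have h2 : 0 ≤ ∑ n ∈ A₁ ∩ A₂, g n := sum_nonneg fun n _ => hg0 n
        linarith
    _ = (∑ m ∈ Icc 2 N.sqrt, g (m ^ 2)) + ∑ m ∈ Icc 2 N.sqrt, g (m.minFac * m ^ 2) := by
        rw [hA₁, hA₂, sum_image (fun a _ b _ h => sq_inj h),
          sum_image (fun a ha b hb h => pm2_injOn (by exact_mod_cast ha) (by exact_mod_cast hb) h)]


/-- Vanishing of `Λ` off prime powers, divided version. -/
lemma PP_div_bound (N : ℕ) :
    ∑ n ∈ (Ioc 0 N).filter (fun n => ¬ n.Prime), Λ n / n ≤ 12 := by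
  have h := sum_nonprime_le N (fun n => Λ n / n)
    (fun n => div_nonneg vonMangoldt_nonneg (Nat.cast_nonneg n))
    (fun n hn => by change Λ n / (n:ℝ) = 0; rw [vonMangoldt_eq_zero_iff.mpr hn, zero_div])
  have hIcc : Icc 2 N.sqrt = Ioc 1 N.sqrt := (Finset.Icc_add_one_left_eq_Ioc 1 N.sqrt)
  have h1 : ∑ m ∈ Icc 2 N.sqrt, Λ (m ^ 2) / ((m ^ 2 : ℕ) : ℝ)
      ≤ ∑ m ∈ Ioc 1 N.sqrt, Real.log m / (m : ℝ) ^ 2 := by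
    rw [hIcc]
    apply sum_le_sum
    intro m hm
    rw [mem_Ioc] at hm
    have hm1 : (1:ℝ) ≤ m := by exact_mod_cast (by omega : 1 ≤ m)
    have e : Λ (m ^ 2) = Λ m := vonMangoldt_apply_pow (by norm_num)
    rw [e]
    push_cast
    apply div_le_div₀ (Real.log_nonneg hm1) vonMangoldt_le_log (by positivity) le_rfl
  have h2 : ∑ m ∈ Icc 2 N.sqrt, Λ (m.minFac * m ^ 2) / ((m.minFac * m ^ 2 : ℕ) : ℝ)
      ≤ ∑ m ∈ Ioc 1 N.sqrt, 2 * (Real.log m / (m : ℝ) ^ 2) := by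
    rw [hIcc]
    apply sum_le_sum
    intro m hm
    rw [mem_Ioc] at hm
    have hm2 : 2 ≤ m := by omega
    have hmf2 : 2 ≤ m.minFac := (Nat.minFac_prime (by omega)).two_le
    have hmfm : m.minFac ≤ m := Nat.minFac_le (by omega)
    have hm1 : (1:ℝ) ≤ m := by exact_mod_cast (by omega : 1 ≤ m)
    have hnum : Λ (m.minFac * m ^ 2) ≤ 3 * Real.log m := by
      calc Λ (m.minFac * m ^ 2) ≤ Real.log ((m.minFac * m ^ 2 : ℕ) : ℝ) := vonMangoldt_le_log
        _ ≤ Real.log ((m : ℝ) ^ 3) := by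
            apply Real.log_le_log (by positivity)
            push_cast
            have : (m.minFac : ℝ) ≤ m := by exact_mod_cast hmfm
            nlinarith
        _ = 3 * Real.log m := by rw [Real.log_pow]; norm_num
    have hden : (2:ℝ) * (m:ℝ) ^ 2 ≤ ((m.minFac * m ^ 2 : ℕ) : ℝ) := by
      push_cast
      have : (2:ℝ) ≤ m.minFac := by exact_mod_cast hmf2
      nlinarith
    have hb : (0:ℝ) < 2 * (m:ℝ) ^ 2 := by positivity
    have hlog : 0 ≤ Real.log m := Real.log_nonneg hm1
    calc Λ (m.minFac * m ^ 2) / ((m.minFac * m ^ 2 : ℕ) : ℝ)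
        ≤ 3 * Real.log m / (2 * (m:ℝ) ^ 2) :=
          div_le_div₀ (by positivity) hnum hb hden
      _ ≤ 2 * (Real.log m / (m : ℝ) ^ 2) := by
          rw [div_le_iff₀ (by positivity)]
          have e4 : 2 * (Real.log m / (m:ℝ) ^ 2) * (2 * (m:ℝ) ^ 2) = 4 * Real.log m := by
            field_simp
            ring
          rw [e4]
          linarith
  have h3 := sum_log_div_sq N.sqrt
  have h4 : ∑ m ∈ Ioc 1 N.sqrt, 2 * (Real.log m / (m : ℝ) ^ 2) ≤ 8 := by
    rw [← mul_sum]
    linarith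
  calc ∑ n ∈ (Ioc 0 N).filter (fun n => ¬ n.Prime), Λ n / n ≤ _ := h
    _ ≤ 12 := by push_cast at h1 h2 ⊢; linarith

lemma log_four_lt : Real.log 4 < 1.4 := by
  have h2 : Real.log 4 = 2 * Real.log 2 := by
    rw [show (4:ℝ) = 2 ^ 2 by norm_num, Real.log_pow]; norm_num
  have := Real.log_two_lt_d9
  rw [h2]
  linarith

lemma sqrt_cast_le (N : ℕ) : (N.sqrt : ℝ) ≤ Real.sqrt N := by
  rw [show (N.sqrt : ℝ) = Real.sqrt ((N.sqrt : ℝ) ^ 2) by rw [Real.sqrt_sq (by positivity)]]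
  apply Real.sqrt_le_sqrt
  have := Nat.sqrt_le' N
  push_cast
  exact_mod_cast this

/-- Chebyshev-type bound : `ψ(N) ≤ 10 N`. -/
lemma psi_bound (N : ℕ) : ∑ n ∈ Ioc 0 N, Λ n ≤ 10 * N := by
  rcases Nat.eq_zero_or_pos N with rfl | hN
  · simp
  have hsplit := sum_filter_add_sum_filter_not (Ioc 0 N) Nat.Prime Λ
  have hprime : ∑ p ∈ (Ioc 0 N).filter Nat.Prime, Λ p ≤ (N:ℝ) * Real.log 4 := by
    calc ∑ p ∈ (Ioc 0 N).filter Nat.Prime, Λ p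
        = ∑ p ∈ (Ioc 0 N).filter Nat.Prime, Real.log p := by
          apply sum_congr rfl
          intro p hp
          rw [mem_filter] at hp
          exact vonMangoldt_apply_prime hp.2
      _ ≤ (N:ℝ) * Real.log 4 := theta_bound N
  have hnp : ∑ n ∈ (Ioc 0 N).filter (fun n => ¬ n.Prime), Λ n ≤ 8 * N := by
    have h := sum_nonprime_le N (fun n => Λ n)
      (fun n => vonMangoldt_nonneg)
      (fun n hn => vonMangoldt_eq_zero_iff.mpr hn)
    set s := N.sqrt with hs
    have hsN : (s:ℝ) * Real.sqrt s ≤ N := by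
      have h1 : (s:ℝ) ≤ Real.sqrt N := sqrt_cast_le N
      have h2 : Real.sqrt s ≤ Real.sqrt N := by
        apply Real.sqrt_le_sqrt
        exact_mod_cast Nat.sqrt_le_self N
      have h4 : Real.sqrt N * Real.sqrt N = N := Real.mul_self_sqrt (by positivity)
      have h5 : (0:ℝ) ≤ s := by positivity
      nlinarith [Real.sqrt_nonneg (s:ℝ), Real.sqrt_nonneg (N:ℝ)]
    have key : ∀ m ∈ Icc 2 s, Λ (m ^ 2) ≤ 2 * Real.sqrt s := by
      intro m hm
      rw [mem_Icc] at hm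
      have e : Λ (m ^ 2) = Λ m := vonMangoldt_apply_pow (by norm_num)
      rw [e]
      calc Λ m ≤ Real.log m := vonMangoldt_le_log
        _ ≤ 2 * Real.sqrt m := log_le_two_sqrt (by omega)
        _ ≤ 2 * Real.sqrt s := by
            have : (m:ℝ) ≤ s := by exact_mod_cast hm.2
            have := Real.sqrt_le_sqrt this
            linarith
    have key2 : ∀ m ∈ Icc 2 s, Λ (m.minFac * m ^ 2) ≤ 6 * Real.sqrt s := by
      intro m hm
      rw [mem_Icc] at hm
      have hmfm : m.minFac ≤ m := Nat.minFac_le (by omega)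
      have hm1 : (1:ℝ) ≤ m := by exact_mod_cast (by omega : 1 ≤ m)
      have hpos : (0:ℝ) < ((m.minFac * m ^ 2 : ℕ) : ℝ) := by
        exact_mod_cast Nat.mul_pos (Nat.minFac_pos m) (pow_pos (by omega : 0 < m) 2)
      calc Λ (m.minFac * m ^ 2) ≤ Real.log ((m.minFac * m ^ 2 : ℕ) : ℝ) := vonMangoldt_le_log
        _ ≤ Real.log ((m : ℝ) ^ 3) := by
            apply Real.log_le_log hpos
            push_cast
            have : (m.minFac : ℝ) ≤ m := by exact_mod_cast hmfm
            nlinarith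
        _ = 3 * Real.log m := by rw [Real.log_pow]; norm_num
        _ ≤ 6 * Real.sqrt m := by
            have := log_le_two_sqrt (show 1 ≤ m by omega)
            linarith
        _ ≤ 6 * Real.sqrt s := by
            have : (m:ℝ) ≤ s := by exact_mod_cast hm.2
            have := Real.sqrt_le_sqrt this
            linarith
    have c1 : ∑ m ∈ Icc 2 s, Λ (m ^ 2) ≤ (s:ℝ) * (2 * Real.sqrt s) := by
      calc ∑ m ∈ Icc 2 s, Λ (m ^ 2) ≤ (Icc 2 s).card • (2 * Real.sqrt s) :=
            sum_le_card_nsmul _ _ _ key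
        _ ≤ (s:ℝ) * (2 * Real.sqrt s) := by
            rw [nsmul_eq_mul]
            have hc : ((Icc 2 s).card : ℝ) ≤ s := by
              have : (Icc 2 s).card ≤ s := by rw [Nat.card_Icc]; omega
              exact_mod_cast this
            exact mul_le_mul_of_nonneg_right hc (by positivity)
    have c2 : ∑ m ∈ Icc 2 s, Λ (m.minFac * m ^ 2) ≤ (s:ℝ) * (6 * Real.sqrt s) := by
      calc ∑ m ∈ Icc 2 s, Λ (m.minFac * m ^ 2) ≤ (Icc 2 s).card • (6 * Real.sqrt s) :=
            sum_le_card_nsmul _ _ _ key2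
        _ ≤ (s:ℝ) * (6 * Real.sqrt s) := by
            rw [nsmul_eq_mul]
            have hc : ((Icc 2 s).card : ℝ) ≤ s := by
              have : (Icc 2 s).card ≤ s := by rw [Nat.card_Icc]; omega
              exact_mod_cast this
            exact mul_le_mul_of_nonneg_right hc (by positivity)
    calc ∑ n ∈ (Ioc 0 N).filter (fun n => ¬ n.Prime), Λ n ≤ _ := h
      _ ≤ (s:ℝ) * (2 * Real.sqrt s) + (s:ℝ) * (6 * Real.sqrt s) := by linarith
      _ = 8 * ((s:ℝ) * Real.sqrt s) := by ring
      _ ≤ 8 * N := by linarith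
  have hN1 : (1:ℝ) ≤ N := by exact_mod_cast hN
  have hl4 := log_four_lt
  have hl4' : (0:ℝ) ≤ Real.log 4 := Real.log_nonneg (by norm_num)
  calc ∑ n ∈ Ioc 0 N, Λ n
      = (∑ p ∈ (Ioc 0 N).filter Nat.Prime, Λ p) + ∑ n ∈ (Ioc 0 N).filter (fun n => ¬ n.Prime), Λ n := hsplit.symm
    _ ≤ (N:ℝ) * Real.log 4 + 8 * N := by linarith
    _ ≤ 10 * N := by nlinarith

/-- The summatory Mertens identity : `∑_{n ≤ N} log n = ∑_{d ≤ N} Λ(d) ⌊N/d⌋`. -/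
lemma mertens_identity (N : ℕ) :
    ∑ n ∈ Ioc 0 N, Real.log n = ∑ d ∈ Ioc 0 N, Λ d * ((N / d : ℕ) : ℝ) := by
  have h1 : ∀ n ∈ Ioc 0 N, Real.log n = ∑ p ∈ n.divisorsAntidiagonal, Λ p.1 := by
    intro n hn
    rw [Nat.sum_divisorsAntidiagonal (fun x y => Λ x)]
    exact vonMangoldt_sum.symm
  rw [sum_congr rfl h1, sum_Icc_antidiag N (fun d m => Λ d)]
  apply sum_congr rfl
  intro d hd
  rw [sum_const, nsmul_eq_mul, Nat.card_Ioc, mul_comm]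
  norm_num

/-- Mertens' lower bound. -/
lemma mertens_lower {N : ℕ} (hN : 1 ≤ N) :
    Real.log N - 1 ≤ ∑ n ∈ Ioc 0 N, Λ n / n := by
  have hN0 : (0:ℝ) < N := by exact_mod_cast hN
  have h1 : ∑ d ∈ Ioc 0 N, Λ d * ((N / d : ℕ) : ℝ) ≤ (N:ℝ) * ∑ n ∈ Ioc 0 N, Λ n / n := by
    rw [mul_sum]
    apply sum_le_sum
    intro d hd
    rw [mem_Ioc] at hd
    have hd0 : (0:ℝ) < d := by exact_mod_cast hd.1
    calc Λ d * ((N / d : ℕ) : ℝ) ≤ Λ d * ((N:ℝ) / d) :=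
          mul_le_mul_of_nonneg_left Nat.cast_div_le vonMangoldt_nonneg
      _ = (N:ℝ) * (Λ d / d) := by field_simp
  have h2 := sum_log_lower N
  rw [mertens_identity] at h2
  have hdiv : (N:ℝ) * Real.log N - N ≤ (N:ℝ) * ∑ n ∈ Ioc 0 N, Λ n / n := le_trans h2 h1
  nlinarith [hdiv]


/-- Hyperbola identity for the twisted log sum. -/
lemma chiL_identity (N : ℕ) :
    ∑ n ∈ Ioc 0 N, chi n * (Real.log n / n)
      = ∑ d ∈ Ioc 0 N, (chi d * Λ d / d) * LN (N / d) := by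
  have per_n : ∀ n ∈ Ioc 0 N, chi n * (Real.log n / n)
      = ∑ p ∈ n.divisorsAntidiagonal, (chi p.1 * Λ p.1 / p.1) * (chi p.2 / p.2) := by
    intro n hn
    rw [mem_Ioc] at hn
    have step : ∀ p ∈ n.divisorsAntidiagonal,
        (chi p.1 * Λ p.1 / p.1) * (chi p.2 / p.2) = Λ p.1 * (chi n * (1 / n)) := by
      intro p hp
      rw [Nat.mem_divisorsAntidiagonal] at hp
      obtain ⟨hpn, hn0⟩ := hp
      have hd0 : p.1 ≠ 0 := by rintro h; rw [h] at hpn; simp at hpn; omega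
      have hm0 : p.2 ≠ 0 := by rintro h; rw [h] at hpn; simp at hpn; omega
      have hchi : chi p.1 * chi p.2 = chi n := by rw [← chi_mul, hpn]
      have hcast : ((p.1 : ℝ)) * (p.2 : ℝ) = (n : ℝ) := by
        rw [← Nat.cast_mul, hpn]
      have hd0' : (p.1 : ℝ) ≠ 0 := Nat.cast_ne_zero.mpr hd0
      have hm0' : (p.2 : ℝ) ≠ 0 := Nat.cast_ne_zero.mpr hm0
      have hn0' : (n : ℝ) ≠ 0 := by
        rw [← hcast]; exact mul_ne_zero hd0' hm0'
      field_simp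
      rw [← hchi, ← hcast]
      ring
    rw [sum_congr rfl step, ← sum_mul, Nat.sum_divisorsAntidiagonal (fun x y => Λ x),
      vonMangoldt_sum]
    ring
  rw [sum_congr rfl per_n, sum_Icc_antidiag N (fun d m => (chi d * Λ d / d) * (chi m / m))]
  apply sum_congr rfl
  intro d hd
  rw [LN, mul_sum]

lemma Nat_div_ge_one {d N : ℕ} (hd : 0 < d) (hdN : d ≤ N) : 1 ≤ N / d :=
  Nat.one_le_div_iff hd |>.mpr hdN

lemma LN_err {d N : ℕ} (hd : 0 < d) (hdN : d ≤ N) :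
    |LN (N / d) - LN N| ≤ (d : ℝ) / N := by
  have hq : 1 ≤ N / d := Nat_div_ge_one hd hdN
  have h1 := LN_chunk hq (Nat.div_le_self N d)
  have h2 : |LN (N / d) - LN N| = |LN N - LN (N / d)| := abs_sub_comm _ _
  rw [h2]
  apply h1.trans
  have hN0 : (0:ℝ) < N := by exact_mod_cast lt_of_lt_of_le hd hdN
  have hd0 : (0:ℝ) < d := by exact_mod_cast hd
  rw [div_le_div_iff₀ (by positivity) hN0]
  have key : N < d * (N / d + 1) := by
    have h1 := Nat.div_add_mod N d
    have h2 := Nat.mod_lt N hd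
    have h3 : d * (N / d + 1) = d * (N / d) + d := by ring
    omega
  have : (N:ℝ) < d * ((N / d : ℕ) + 1) := by exact_mod_cast key
  nlinarith

/-- Bound for the twisted von Mangoldt sum. -/
lemma chiA_bound {N : ℕ} (hN : 1 ≤ N) :
    |∑ d ∈ Ioc 0 N, chi d * Λ d / d| ≤ 30 := by
  set A := ∑ d ∈ Ioc 0 N, chi d * Λ d / d with hA
  set B := ∑ n ∈ Ioc 0 N, chi n * (Real.log n / n) with hB
  have hid : B = ∑ d ∈ Ioc 0 N, (chi d * Λ d / d) * LN (N / d) := chiL_identity N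
  have hsplit : B - LN N * A = ∑ d ∈ Ioc 0 N, (chi d * Λ d / d) * (LN (N / d) - LN N) := by
    rw [hid, hA, mul_sum, ← sum_sub_distrib]
    apply sum_congr rfl
    intro d _
    ring
  have herr : |∑ d ∈ Ioc 0 N, (chi d * Λ d / d) * (LN (N / d) - LN N)| ≤ 10 := by
    calc |∑ d ∈ Ioc 0 N, (chi d * Λ d / d) * (LN (N / d) - LN N)|
        ≤ ∑ d ∈ Ioc 0 N, |(chi d * Λ d / d) * (LN (N / d) - LN N)| := abs_sum_le_sum_abs _ _
      _ ≤ ∑ d ∈ Ioc 0 N, Λ d / N := by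
          apply sum_le_sum
          intro d hd
          rw [mem_Ioc] at hd
          have hd0 : (0:ℝ) < d := by exact_mod_cast hd.1
          have hN0 : (0:ℝ) < N := by exact_mod_cast hN
          rw [abs_mul]
          have e1 : |chi d * Λ d / d| ≤ Λ d / d := by
            rw [abs_div, abs_mul, abs_of_nonneg vonMangoldt_nonneg, abs_of_pos hd0]
            gcongr
            nlinarith [abs_chi_le d, vonMangoldt_nonneg (n := d)]
          have e2 := LN_err hd.1 hd.2
          calc |chi d * Λ d / d| * |LN (N / d) - LN N| ≤ (Λ d / d) * ((d:ℝ) / N) :=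
                mul_le_mul e1 e2 (abs_nonneg _) (div_nonneg vonMangoldt_nonneg hd0.le)
            _ = Λ d / N := by
                field_simp
      _ = (∑ d ∈ Ioc 0 N, Λ d) / N := by rw [sum_div]
      _ ≤ 10 := by
          have := psi_bound N
          have hN0 : (0:ℝ) < N := by exact_mod_cast hN
          rw [div_le_iff₀ hN0]
          linarith
  have hLB : |B| ≤ 2 := B_bound N
  have hLN : 2 / 5 ≤ LN N := LN_lower hN
  have h1 : |LN N * A| ≤ 12 := by
    calc |LN N * A| = |LN N * A - B + B| := by ring_nf
      _ ≤ |LN N * A - B| + |B| := abs_add_le _ _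
      _ = |B - LN N * A| + |B| := by rw [abs_sub_comm]
      _ ≤ 10 + 2 := by rw [hsplit]; exact add_le_add herr hLB
      _ = 12 := by norm_num
  have h2 : |LN N * A| = LN N * |A| := by
    rw [abs_mul, abs_of_nonneg (by linarith)]
  rw [h2] at h1
  nlinarith [abs_nonneg A]


/-- Mertens' lower bound restricted to primes. -/
lemma mertens_prime_lower {N : ℕ} (hN : 1 ≤ N) :
    Real.log N - 13 ≤ ∑ p ∈ (Ioc 0 N).filter Nat.Prime, Real.log p / p := by
  have hsplit := sum_filter_add_sum_filter_not (Ioc 0 N) Nat.Prime (fun n => Λ n / n)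
  have h1 := mertens_lower hN
  have h2 := PP_div_bound N
  have h3 : ∑ p ∈ (Ioc 0 N).filter Nat.Prime, Λ p / p
      = ∑ p ∈ (Ioc 0 N).filter Nat.Prime, Real.log p / p := by
    apply sum_congr rfl
    intro p hp
    rw [mem_filter] at hp
    rw [vonMangoldt_apply_prime hp.2]
  have h4 : ∑ n ∈ (Ioc 0 N).filter (fun n => ¬ n.Prime), Λ n / n
      = ∑ n ∈ (Ioc 0 N).filter (fun n => ¬ n.Prime), (fun n => Λ n / (n:ℝ)) n := rfl
  rw [← h3]
  have := hsplit
  linarith [this, h1, h2]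

/-- Lower bound for the twisted prime sum. -/
lemma chiP_lower {N : ℕ} (hN : 1 ≤ N) :
    -42 ≤ ∑ p ∈ (Ioc 0 N).filter Nat.Prime, chi p * (Real.log p / p) := by
  have hsplit := sum_filter_add_sum_filter_not (Ioc 0 N) Nat.Prime (fun n => chi n * Λ n / n)
  have h1 := chiA_bound hN
  have h2 : |∑ n ∈ (Ioc 0 N).filter (fun n => ¬ n.Prime), chi n * Λ n / n| ≤ 12 := by
    calc |∑ n ∈ (Ioc 0 N).filter (fun n => ¬ n.Prime), chi n * Λ n / n|
        ≤ ∑ n ∈ (Ioc 0 N).filter (fun n => ¬ n.Prime), |chi n * Λ n / n| := abs_sum_le_sum_abs _ _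
      _ ≤ ∑ n ∈ (Ioc 0 N).filter (fun n => ¬ n.Prime), Λ n / n := by
          apply sum_le_sum
          intro n hn
          rw [mem_filter, mem_Ioc] at hn
          have hn0 : (0:ℝ) < n := by exact_mod_cast hn.1.1
          rw [abs_div, abs_mul, abs_of_nonneg vonMangoldt_nonneg, abs_of_pos hn0]
          gcongr
          nlinarith [abs_chi_le n, vonMangoldt_nonneg (n := n)]
      _ ≤ 12 := PP_div_bound N
  have h3 : ∑ p ∈ (Ioc 0 N).filter Nat.Prime, chi p * Λ p / p
      = ∑ p ∈ (Ioc 0 N).filter Nat.Prime, chi p * (Real.log p / p) := by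
    apply sum_congr rfl
    intro p hp
    rw [mem_filter] at hp
    rw [vonMangoldt_apply_prime hp.2, mul_div_assoc]
  rw [← h3]
  rw [abs_le] at h1 h2
  linarith [h1.1, h2.2, hsplit]

/-- Mertens-type lower bound for primes `≡ 1 [mod 4]`. -/
lemma primes_one_mod_four_lower {N : ℕ} (hN : 1 ≤ N) :
    Real.log N / 2 - 28 ≤ ∑ p ∈ (Ioc 0 N).filter (fun p => p.Prime ∧ p % 4 = 1),
      Real.log p / p := by
  set P := (Ioc 0 N).filter Nat.Prime with hP
  have key : ∑ p ∈ P, (1 + chi p) * (Real.log p / p)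
      ≤ 2 * (∑ p ∈ (Ioc 0 N).filter (fun p => p.Prime ∧ p % 4 = 1), Real.log p / p) + 1 := by
    have hsplit := sum_filter_add_sum_filter_not P (fun p => p % 4 = 1)
      (fun p => (1 + chi p) * (Real.log p / p))
    have e1 : P.filter (fun p => p % 4 = 1) = (Ioc 0 N).filter (fun p => p.Prime ∧ p % 4 = 1) := by
      rw [hP, filter_filter]
    have e2 : ∑ p ∈ P.filter (fun p => p % 4 = 1), (1 + chi p) * (Real.log p / p)
        = 2 * ∑ p ∈ (Ioc 0 N).filter (fun p => p.Prime ∧ p % 4 = 1), Real.log p / p := by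
      rw [e1, mul_sum]
      apply sum_congr rfl
      intro p hp
      rw [mem_filter] at hp
      rw [chi_def, if_pos hp.2.2]
      ring
    have e3 : ∑ p ∈ P.filter (fun p => ¬ p % 4 = 1), (1 + chi p) * (Real.log p / p) ≤ 1 := by
      have hpt : ∀ p ∈ P.filter (fun p => ¬ p % 4 = 1),
          (1 + chi p) * (Real.log p / p) ≤ if p = 2 then 1 else 0 := by
        intro p hp
        rw [mem_filter, hP, mem_filter, mem_Ioc] at hp
        obtain ⟨⟨⟨hp0, hpN⟩, hprime⟩, hmod⟩ := hp
        have h4 : p % 4 = 0 ∨ p % 4 = 2 ∨ p % 4 = 3 := by omega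
        rcases h4 with h | h | h
        · exfalso
          have h2 : 2 ∣ p := by omega
          have := (Nat.Prime.eq_one_or_self_of_dvd hprime 2 h2)
          omega
        · have hp2 : p = 2 := by
            have h2 : 2 ∣ p := by omega
            have := (Nat.Prime.eq_one_or_self_of_dvd hprime 2 h2)
            omega
          subst hp2
          rw [if_pos rfl, chi_def]
          norm_num
          have hl2 : Real.log 2 ≤ 1 := by
            have := Real.log_le_sub_one_of_pos (by norm_num : (0:ℝ) < 2)
            linarith
          have hl0 : 0 ≤ Real.log 2 := Real.log_nonneg (by norm_num)
          linarith
        · rw [if_neg (by omega), chi_def, if_neg (by omega), if_pos h]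
          norm_num
      calc ∑ p ∈ P.filter (fun p => ¬ p % 4 = 1), (1 + chi p) * (Real.log p / p)
          ≤ ∑ p ∈ P.filter (fun p => ¬ p % 4 = 1), (if p = 2 then (1:ℝ) else 0) :=
            sum_le_sum hpt
        _ ≤ 1 := by
            rw [sum_ite_eq' (P.filter (fun p => ¬ p % 4 = 1)) 2 (fun _ => (1:ℝ))]
            split_ifs <;> norm_num
    linarith [hsplit, e2, e3]
  have expand : ∑ p ∈ P, (1 + chi p) * (Real.log p / p)
      = (∑ p ∈ P, Real.log p / p) + ∑ p ∈ P, chi p * (Real.log p / p) := by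
    rw [← sum_add_distrib]
    apply sum_congr rfl
    intro p _
    ring
  have hm := mertens_prime_lower hN
  have hx := chiP_lower hN
  rw [expand] at key
  linarith



/-- Counting points of a residue class in `(0, N]`. -/
lemma class_count_lower {p N : ℕ} (hp0 : 0 < p) (v : ℕ) :
    (N:ℝ) / p - 1 ≤ (((Ioc 0 N).filter (fun n => n ≡ v [MOD p])).card : ℝ) := by
  have h := Nat.Ioc_filter_modEq_card 0 N hp0 v
  have hA : ((N:ℚ) - v) / p - 1 < (⌊((N:ℚ) - v) / p⌋ : ℚ) := Int.sub_one_lt_floor _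
  have hB : (⌊((0:ℚ) - v) / p⌋ : ℚ) ≤ ((0:ℚ) - v) / p := Int.floor_le _
  have hle : ⌊((N:ℚ) - v) / p⌋ - ⌊((0:ℚ) - v) / p⌋
      ≤ ((((Ioc 0 N).filter (fun n => n ≡ v [MOD p])).card : ℤ)) := by
    rw [h]
    push_cast
    exact le_max_left _ _
  have hq : ((N:ℚ) / p - 1) ≤ ((((Ioc 0 N).filter (fun n => n ≡ v [MOD p])).card : ℚ)) := by
    have hcast : ((⌊((N:ℚ) - v) / p⌋ - ⌊((0:ℚ) - v) / p⌋ : ℤ) : ℚ)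
        ≤ ((((Ioc 0 N).filter (fun n => n ≡ v [MOD p])).card : ℚ)) := by
      exact_mod_cast hle
    push_cast at hcast
    have hp0' : (0:ℚ) < p := by exact_mod_cast hp0
    have : (N:ℚ) / p - 1 ≤ (⌊((N:ℚ) - v) / p⌋ : ℚ) - (⌊((0:ℚ) - v) / p⌋ : ℚ) := by
      have e : ((N:ℚ) - v) / p - ((0:ℚ) - v) / p = (N:ℚ) / p := by
        field_simp
        ring
      nlinarith [hA, hB]
    linarith
  have hr := (Rat.cast_le (K := ℝ)).mpr hq
  push_cast at hr
  exact hr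

/-- For `p ≡ 1 [4]` prime, at least `2N/p - 2` of the `n ≤ N` have `p ∣ n² + 1`. -/
lemma count_divisors_lower {p N : ℕ} (hp : p.Prime) (hmod : p % 4 = 1) :
    2 * (N:ℝ) / p - 2 ≤ (((Ioc 0 N).filter (fun n => p ∣ n ^ 2 + 1)).card : ℝ) := by
  haveI : Fact p.Prime := ⟨hp⟩
  have hp5 : 5 ≤ p := by
    have := hp.two_le
    rcases Nat.lt_or_ge p 5 with h | h
    · interval_cases p <;> simp_all
    · exact h
  have hsq : IsSquare (-1 : ZMod p) := ZMod.exists_sq_eq_neg_one_iff.mpr (by omega)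
  obtain ⟨z, hz⟩ := hsq
  have hz2 : z * z = -1 := hz.symm
  have hz0 : z ≠ 0 := by
    rintro rfl
    rw [mul_zero] at hz2
    exact (by simpa using hz2.symm : (-1 : ZMod p) = 0) |> fun h => by
      have : (1 : ZMod p) = 0 := by linear_combination -h
      exact one_ne_zero this
  have hzz : z ≠ -z := by
    intro h
    have h2 : (2 : ZMod p) * z = 0 := by linear_combination h
    have h2ne : (2 : ZMod p) ≠ 0 := by
      have : ((2:ℕ) : ZMod p) ≠ 0 := by
        rw [Ne, ZMod.natCast_eq_zero_iff]
        intro hdvd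
        have := Nat.le_of_dvd (by norm_num) hdvd
        omega
      simpa using this
    rcases mul_eq_zero.mp h2 with h' | h'
    · exact h2ne h'
    · exact hz0 h'
  set a := z.val with ha
  set b := (-z).val with hb
  have hva : ((a : ℕ) : ZMod p) = z := ZMod.natCast_rightInverse z
  have hvb : ((b : ℕ) : ZMod p) = -z := ZMod.natCast_rightInverse (-z)
  have hab : a ≠ b := by
    intro h
    apply hzz
    have h2 : ((a : ℕ) : ZMod p) = ((b : ℕ) : ZMod p) := by rw [h]
    rw [hva, hvb] at h2
    exact h2
  have key : ∀ w : ZMod p, ∀ n : ℕ, n ≡ w.val [MOD p] → w * w = -1 → p ∣ n ^ 2 + 1 := by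
    intro w n hn hw
    have h1 : ((n : ℕ) : ZMod p) = ((w.val : ℕ) : ZMod p) := (ZMod.natCast_eq_natCast_iff _ _ _).mpr hn
    rw [ZMod.natCast_rightInverse w] at h1
    have h2 : ((n ^ 2 + 1 : ℕ) : ZMod p) = 0 := by
      push_cast
      rw [h1]
      rw [pow_two, hw]
      ring
    exact (ZMod.natCast_eq_zero_iff _ _).mp h2
  have hdisj : Disjoint ((Ioc 0 N).filter (fun n => n ≡ a [MOD p]))
      ((Ioc 0 N).filter (fun n => n ≡ b [MOD p])) := by
    rw [Finset.disjoint_left]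
    intro n hn1 hn2
    rw [mem_filter] at hn1 hn2
    have h1 : n % p = a % p := hn1.2
    have h2 : n % p = b % p := hn2.2
    have ha' : a % p = a := Nat.mod_eq_of_lt (ZMod.val_lt z)
    have hb' : b % p = b := Nat.mod_eq_of_lt (ZMod.val_lt (-z))
    omega
  have hsub : ((Ioc 0 N).filter (fun n => n ≡ a [MOD p])) ∪ ((Ioc 0 N).filter (fun n => n ≡ b [MOD p]))
      ⊆ (Ioc 0 N).filter (fun n => p ∣ n ^ 2 + 1) := by
    intro n hn
    rcases Finset.mem_union.mp hn with h | h
    · rw [mem_filter] at h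
      exact mem_filter.mpr ⟨h.1, key z n h.2 hz2⟩
    · rw [mem_filter] at h
      refine mem_filter.mpr ⟨h.1, key (-z) n h.2 ?_⟩
      rw [neg_mul_neg, hz2]
  have hcard : ((Ioc 0 N).filter (fun n => n ≡ a [MOD p])).card
      + ((Ioc 0 N).filter (fun n => n ≡ b [MOD p])).card
      ≤ ((Ioc 0 N).filter (fun n => p ∣ n ^ 2 + 1)).card := by
    rw [← Finset.card_union_of_disjoint hdisj]
    exact Finset.card_le_card hsub
  have hc1 := class_count_lower (N := N) hp.pos a
  have hc2 := class_count_lower (N := N) hp.pos b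
  have hcast : ((((Ioc 0 N).filter (fun n => n ≡ a [MOD p])).card : ℝ))
      + ((((Ioc 0 N).filter (fun n => n ≡ b [MOD p])).card : ℝ))
      ≤ (((Ioc 0 N).filter (fun n => p ∣ n ^ 2 + 1)).card : ℝ) := by
    exact_mod_cast hcard
  have e : 2 * (N:ℝ) / p - 2 = ((N:ℝ)/p - 1) + ((N:ℝ)/p - 1) := by ring
  rw [e]
  linarith

/-- A bad `n` admits a large prime factor of `n² + 1`. -/
lemma exists_big_prime {n : ℕ} (hn : 1 ≤ n) {y : ℝ} (hy0 : 0 < y)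
    (h : ¬ ((Pplus (n ^ 2 + 1) : ℝ) ≤ y)) :
    ∃ q : ℕ, q.Prime ∧ q ∣ n ^ 2 + 1 ∧ y < (q : ℝ) := by
  have h2 : 1 < n ^ 2 + 1 := by nlinarith
  have hne : (n ^ 2 + 1).primeFactors.Nonempty := Nat.nonempty_primeFactors.mpr h2
  obtain ⟨q, hq, hsup⟩ := Finset.exists_mem_eq_sup _ hne (_root_.id : ℕ → ℕ)
  have hqp : q.Prime := Nat.prime_of_mem_primeFactors hq
  have hPp : Pplus (n ^ 2 + 1) = q := by
    rw [Pplus, hsup]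
    simp only [id_eq]
    exact max_eq_right hqp.one_lt.le
  rw [hPp] at h
  exact ⟨q, hqp, Nat.dvd_of_mem_primeFactors hq, lt_of_not_ge h⟩


/-- Sum of logs of a set of distinct prime factors of `m` is at most `log m`. -/
lemma sum_log_primeFactors_le {m : ℕ} (hm : 0 < m) (F : Finset ℕ)
    (hF : F ⊆ m.primeFactors) : ∑ p ∈ F, Real.log p ≤ Real.log m := by
  have hdvd : ∏ p ∈ F, p ∣ m :=
    dvd_trans (Finset.prod_dvd_prod_of_subset _ _ _ hF) (Nat.prod_primeFactors_dvd m)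
  have hle : (∏ p ∈ F, p) ≤ m := Nat.le_of_dvd hm hdvd
  have hne : ∀ p ∈ F, ((p:ℝ)) ≠ 0 := by
    intro p hp
    have := Nat.prime_of_mem_primeFactors (hF hp)
    exact_mod_cast this.pos.ne'
  calc ∑ p ∈ F, Real.log p = Real.log (∏ p ∈ F, (p:ℝ)) := (Real.log_prod hne).symm
    _ = Real.log ((∏ p ∈ F, p : ℕ) : ℝ) := by rw [Nat.cast_prod]
    _ ≤ Real.log m := by
        apply Real.log_le_log
        · have : 0 < ∏ p ∈ F, p := Nat.pos_of_ne_zero (by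
            intro h
            rcases Finset.prod_eq_zero_iff.mp h with ⟨p, hp, rfl⟩
            exact (Nat.prime_of_mem_primeFactors (hF hp)).pos.ne' rfl)
          exact_mod_cast this
        · exact_mod_cast hle

lemma per_n_bound {N : ℕ} {y : ℝ} (hyN : (N:ℝ) < y) (hy1 : 1 < y) {n : ℕ}
    (hn : n ∈ Ioc 0 N) :
    (if (Pplus (n ^ 2 + 1) : ℝ) ≤ y then (0:ℝ) else Real.log y)
      + ∑ p ∈ (Ioc 0 N).filter (fun p => p.Prime ∧ p % 4 = 1),
          (if p ∣ n ^ 2 + 1 then Real.log p else 0)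
    ≤ Real.log ((n ^ 2 + 1 : ℕ) : ℝ) := by
  rw [mem_Ioc] at hn
  have hm0 : 0 < n ^ 2 + 1 := by positivity
  have hsum : ∑ p ∈ (Ioc 0 N).filter (fun p => p.Prime ∧ p % 4 = 1),
        (if p ∣ n ^ 2 + 1 then Real.log p else 0)
      = ∑ p ∈ ((Ioc 0 N).filter (fun p => p.Prime ∧ p % 4 = 1)).filter (fun p => p ∣ n ^ 2 + 1),
          Real.log p := (sum_filter _ _).symm
  rw [hsum]
  set T := ((Ioc 0 N).filter (fun p => p.Prime ∧ p % 4 = 1)).filter (fun p => p ∣ n ^ 2 + 1) with hT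
  have hTsub : T ⊆ (n ^ 2 + 1).primeFactors := by
    intro p hp
    rw [hT, mem_filter, mem_filter] at hp
    exact Nat.mem_primeFactors.mpr ⟨hp.1.2.1, hp.2, by omega⟩
  split_ifs with hgood
  · rw [zero_add]
    exact sum_log_primeFactors_le hm0 T hTsub
  · obtain ⟨q, hqp, hqdvd, hqy⟩ := exists_big_prime hn.1 (by linarith) hgood
    have hqT : q ∉ T := by
      intro hq
      have := hTsub  -- q ∈ T → q ≤ N
      rw [hT, mem_filter, mem_filter, mem_Ioc] at hq
      have : (q:ℝ) ≤ N := by exact_mod_cast hq.1.1.2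
      linarith
    have hins : insert q T ⊆ (n ^ 2 + 1).primeFactors := by
      intro p hp
      rcases Finset.mem_insert.mp hp with rfl | hp
      · exact Nat.mem_primeFactors.mpr ⟨hqp, hqdvd, by omega⟩
      · exact hTsub hp
    have hsum2 := sum_log_primeFactors_le hm0 (insert q T) hins
    rw [Finset.sum_insert hqT] at hsum2
    have hlogq : Real.log y ≤ Real.log q := Real.log_le_log (by linarith) hqy.le
    linarith

/-- The master inequality. -/
lemma star {N : ℕ} {y : ℝ} (hyN : (N:ℝ) < y) (hy1 : 1 < y) :
    (((Ioc 0 N).filter (fun n => ¬ ((Pplus (n ^ 2 + 1) : ℝ) ≤ y))).card : ℝ) * Real.log y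
      + ∑ p ∈ (Ioc 0 N).filter (fun p => p.Prime ∧ p % 4 = 1),
          Real.log p * (((Ioc 0 N).filter (fun n => p ∣ n ^ 2 + 1)).card : ℝ)
    ≤ ∑ n ∈ Ioc 0 N, Real.log ((n ^ 2 + 1 : ℕ) : ℝ) := by
  have h := sum_le_sum (fun n hn => per_n_bound hyN hy1 hn)
  rw [sum_add_distrib] at h
  have e1 : ∑ n ∈ Ioc 0 N, (if (Pplus (n ^ 2 + 1) : ℝ) ≤ y then (0:ℝ) else Real.log y)
      = (((Ioc 0 N).filter (fun n => ¬ ((Pplus (n ^ 2 + 1) : ℝ) ≤ y))).card : ℝ) * Real.log y := by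
    have : ∀ n ∈ Ioc 0 N, (if (Pplus (n ^ 2 + 1) : ℝ) ≤ y then (0:ℝ) else Real.log y)
        = (if ¬ ((Pplus (n ^ 2 + 1) : ℝ) ≤ y) then Real.log y else 0) := by
      intro n _
      rw [ite_not]
    rw [sum_congr rfl this, ← sum_filter, sum_const, nsmul_eq_mul]
  have e2 : ∑ n ∈ Ioc 0 N, ∑ p ∈ (Ioc 0 N).filter (fun p => p.Prime ∧ p % 4 = 1),
        (if p ∣ n ^ 2 + 1 then Real.log p else 0)
      = ∑ p ∈ (Ioc 0 N).filter (fun p => p.Prime ∧ p % 4 = 1),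
          Real.log p * (((Ioc 0 N).filter (fun n => p ∣ n ^ 2 + 1)).card : ℝ) := by
    rw [Finset.sum_comm]
    apply sum_congr rfl
    intro p _
    rw [← sum_filter, sum_const, nsmul_eq_mul, mul_comm]
  rw [e1, e2] at h
  exact h


end Friable
end

open Finset in
/-- Friable values of `n² + 1` (Théorème 1.4). -/
theorem friable_values_n_sq_add_one (ε : ℝ) (hε : 0 < ε) :
    ∃ x₀ : ℝ, ∀ x : ℝ, x₀ ≤ x → ∀ y : ℝ, x < y → y ≤ x ^ 2 →
      ∀ u : ℝ, u = Real.log x / Real.log y →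
      (1 - u - ε) * x ≤
        (((Finset.Icc 1 ⌊x⌋₊).filter (fun n => (Pplus (n ^ 2 + 1) : ℝ) ≤ y)).card : ℝ) := by
  refine ⟨max 16 (max (2/ε) (Real.exp (200/ε))), ?_⟩
  intro x hx y hxy _hyx2 u hu
  set N := ⌊x⌋₊ with hN
  have hx16 : (16:ℝ) ≤ x := le_trans (le_max_left _ _) hx
  have hx2 : 2/ε ≤ x := le_trans (le_max_of_le_right (le_max_left _ _)) hx
  have hxe : Real.exp (200/ε) ≤ x := le_trans (le_max_of_le_right (le_max_right _ _)) hx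
  have hx0 : (0:ℝ) < x := by linarith
  have hlogx : 200/ε ≤ Real.log x := by
    rw [← Real.log_exp (200/ε)]
    exact Real.log_le_log (Real.exp_pos _) hxe
  have hlogx0 : 0 < Real.log x := lt_of_lt_of_le (by positivity) hlogx
  have hy16 : (16:ℝ) < y := lt_of_le_of_lt hx16 hxy
  have hlogxy : Real.log x ≤ Real.log y := Real.log_le_log hx0 hxy.le
  have hlogy0 : 0 < Real.log y := lt_of_lt_of_le hlogx0 hlogxy
  have hNx : (N:ℝ) ≤ x := Nat.floor_le hx0.le
  have hxN : x < (N:ℝ) + 1 := Nat.lt_floor_add_one x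
  have hN16 : 16 ≤ N := Nat.le_floor (by exact_mod_cast hx16)
  have hN1 : 1 ≤ N := by omega
  have hN0 : (0:ℝ) < N := by exact_mod_cast hN1
  have hyN : (N:ℝ) < y := lt_of_le_of_lt hNx hxy
  have hstar := Friable.star (N := N) hyN (by linarith)
  -- RHS bound
  have hRHS : ∑ n ∈ Ioc 0 N, Real.log ((n^2+1:ℕ):ℝ) ≤ (N:ℝ) * (1 + 2*Real.log x) := by
    have hbound : ∀ n ∈ Ioc 0 N, Real.log ((n^2+1:ℕ):ℝ) ≤ 1 + 2*Real.log x := by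
      intro n hn
      rw [mem_Ioc] at hn
      have hn1 : (1:ℝ) ≤ n := by exact_mod_cast hn.1
      have hnx : (n:ℝ) ≤ x := le_trans (by exact_mod_cast hn.2) hNx
      have hc : ((n^2+1:ℕ):ℝ) = (n:ℝ)^2+1 := by push_cast; ring
      rw [hc]
      have h1 : (n:ℝ)^2 + 1 ≤ 2*(n:ℝ)^2 := by nlinarith
      calc Real.log ((n:ℝ)^2+1) ≤ Real.log (2*(n:ℝ)^2) :=
            Real.log_le_log (by positivity) h1
        _ = Real.log 2 + 2*Real.log n := by
            rw [Real.log_mul (by norm_num) (by positivity), Real.log_pow]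
            push_cast
            ring
        _ ≤ 1 + 2*Real.log x := by
            have h2 := Real.log_le_sub_one_of_pos (by norm_num : (0:ℝ) < 2)
            have h3 : Real.log n ≤ Real.log x := Real.log_le_log (by linarith) hnx
            linarith
    calc ∑ n ∈ Ioc 0 N, Real.log ((n^2+1:ℕ):ℝ) ≤ (Ioc 0 N).card • (1 + 2*Real.log x) :=
          sum_le_card_nsmul _ _ _ hbound
      _ = (N:ℝ) * (1 + 2*Real.log x) := by
          rw [Nat.card_Ioc, nsmul_eq_mul]
          norm_num
  -- middle bound
  have hmid : (N:ℝ)*Real.log N - 59*N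
      ≤ ∑ p ∈ (Ioc 0 N).filter (fun p => p.Prime ∧ p % 4 = 1),
          Real.log p * (((Ioc 0 N).filter (fun n => p ∣ n ^ 2 + 1)).card : ℝ) := by
    have hterm : ∀ p ∈ (Ioc 0 N).filter (fun p => p.Prime ∧ p % 4 = 1),
        2*(N:ℝ)*(Real.log p/p) - 2*Real.log p
          ≤ Real.log p * (((Ioc 0 N).filter (fun n => p ∣ n ^ 2 + 1)).card : ℝ) := by
      intro p hp
      rw [mem_filter, mem_Ioc] at hp
      have hcd := Friable.count_divisors_lower (N := N) hp.2.1 hp.2.2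
      have hlogp : (0:ℝ) ≤ Real.log p := Real.log_natCast_nonneg p
      have e : 2*(N:ℝ)*(Real.log p/p) - 2*Real.log p = Real.log p * (2*(N:ℝ)/p - 2) := by
        ring
      rw [e]
      exact mul_le_mul_of_nonneg_left hcd hlogp
    have h1 := sum_le_sum hterm
    rw [sum_sub_distrib] at h1
    have hf := Friable.primes_one_mod_four_lower hN1
    have hsub : (Ioc 0 N).filter (fun p => p.Prime ∧ p % 4 = 1) ⊆ (Ioc 0 N).filter Nat.Prime :=
      monotone_filter_right _ (fun p _ hp => hp.1)
    have hg : ∑ p ∈ (Ioc 0 N).filter (fun p => p.Prime ∧ p % 4 = 1), Real.log p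
        ≤ (N:ℝ) * Real.log 4 := by
      calc ∑ p ∈ (Ioc 0 N).filter (fun p => p.Prime ∧ p % 4 = 1), Real.log p
          ≤ ∑ p ∈ (Ioc 0 N).filter Nat.Prime, Real.log p :=
            sum_le_sum_of_subset_of_nonneg hsub (fun p _ _ => Real.log_natCast_nonneg p)
        _ ≤ (N:ℝ) * Real.log 4 := Friable.theta_bound N
    have hsum1 : ∑ p ∈ (Ioc 0 N).filter (fun p => p.Prime ∧ p % 4 = 1), 2*(N:ℝ)*(Real.log p/p)
        = 2*(N:ℝ) * ∑ p ∈ (Ioc 0 N).filter (fun p => p.Prime ∧ p % 4 = 1), Real.log p/p := by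
      rw [mul_sum]
    have hlog4 := Friable.log_four_lt
    have : 2*(N:ℝ)*(Real.log N/2 - 28) - 2*((N:ℝ)*Real.log 4)
        ≤ ∑ p ∈ (Ioc 0 N).filter (fun p => p.Prime ∧ p % 4 = 1), 2*(N:ℝ)*(Real.log p/p)
          - ∑ p ∈ (Ioc 0 N).filter (fun p => p.Prime ∧ p % 4 = 1), 2*Real.log p := by
      rw [hsum1, ← mul_sum (a := (2:ℝ))]
      have t1 : 2*(N:ℝ)*(Real.log N/2 - 28)
          ≤ 2*(N:ℝ) * ∑ p ∈ (Ioc 0 N).filter (fun p => p.Prime ∧ p % 4 = 1), Real.log p/p := by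
        apply mul_le_mul_of_nonneg_left hf (by positivity)
      have t2 : 2 * ∑ p ∈ (Ioc 0 N).filter (fun p => p.Prime ∧ p % 4 = 1), Real.log p
          ≤ 2*((N:ℝ)*Real.log 4) := by linarith
      linarith
    have final : (N:ℝ)*Real.log N - 59*N ≤ 2*(N:ℝ)*(Real.log N/2 - 28) - 2*((N:ℝ)*Real.log 4) := by
      have : 2*((N:ℝ)*Real.log 4) ≤ 2*(N:ℝ)*1.4 := by nlinarith [Real.log_nonneg (by norm_num : (1:ℝ) ≤ 4)]
      nlinarith
    linarith
  -- combine
  set B := (((Ioc 0 N).filter (fun n => ¬ ((Pplus (n ^ 2 + 1) : ℝ) ≤ y))).card : ℝ) with hB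
  have hBlogy : B * Real.log y ≤ x * Real.log x + 61*x := by
    have h1 : B * Real.log y ≤ (N:ℝ) * (1 + 2*Real.log x) - ((N:ℝ)*Real.log N - 59*N) := by
      linarith
    have hlogNx : Real.log x ≤ Real.log N + 1 := by
      have h2 : Real.log x ≤ Real.log ((N:ℝ)+1) := Real.log_le_log hx0 hxN.le
      have h3 := Friable.log_succ_le N hN1
      have h4 : 1/(N:ℝ) ≤ 1 := by
        rw [div_le_one hN0]
        exact_mod_cast hN1
      linarith
    have h5 : (N:ℝ) * (1 + 2*Real.log x) - ((N:ℝ)*Real.log N - 59*N)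
        ≤ (N:ℝ)*Real.log x + 61*N := by nlinarith
    have h6 : (N:ℝ)*Real.log x ≤ x*Real.log x := by nlinarith
    have h7 : (61:ℝ)*N ≤ 61*x := by linarith
    linarith
  have hBle : B ≤ u*x + (ε/3)*x := by
    have h1 : B ≤ (x * Real.log x + 61*x) / Real.log y := by
      rw [le_div_iff₀ hlogy0]
      exact hBlogy
    have h2 : (x * Real.log x + 61*x) / Real.log y
        = x * (Real.log x / Real.log y) + 61*x/Real.log y := by
      field_simp
    have h3 : 61*x/Real.log y ≤ (ε/3)*x := by
      have ha : 61*x/Real.log y ≤ 61*x/Real.log x := by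
        apply div_le_div_of_nonneg_left (by positivity) hlogx0 hlogxy
      have hb : 61*x/Real.log x ≤ (ε/3)*x := by
        rw [div_le_iff₀ hlogx0]
        have hc : (ε/3) * (200/ε) ≤ (ε/3) * Real.log x :=
          mul_le_mul_of_nonneg_left hlogx (by positivity)
        have hd : (ε/3) * (200/ε) = 200/3 := by field_simp
        nlinarith
      linarith
    rw [h2] at h1
    rw [hu]
    linarith
  have hGB : (((Ioc 0 N).filter (fun n => (Pplus (n ^ 2 + 1) : ℝ) ≤ y)).card : ℝ) + B = N := by
    have := Finset.card_filter_add_card_filter_not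
      (s := Ioc 0 N) (p := fun n => (Pplus (n ^ 2 + 1) : ℝ) ≤ y)
    rw [Nat.card_Ioc] at this
    rw [hB]
    have h0 : (N - 0 : ℕ) = N := by omega
    rw [h0] at this
    exact_mod_cast congrArg (Nat.cast : ℕ → ℝ) this
  have hIcc : Finset.Icc 1 N = Finset.Ioc 0 N := Finset.Icc_add_one_left_eq_Ioc 0 N
  rw [hIcc]
  have hεx : 2 ≤ ε * x := by
    rw [div_le_iff₀ hε] at hx2
    linarith [hx2]
  nlinarith [hGB, hBle, hNx, hxN, hεx]
end

section
/- Let u > 0 and v be reals with 0 ≤ v < min(1,u), and let k ≥ 2 be an integer. Then u·μ_k(u,v) = 0 if 0 < u ≤ 1, and u·μ_k(u,v) = ∫_{max(1,u−1)}^{u} μ_{k−1}(s,v) ds if u > 1. -/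
open MeasureTheory

/-- The region `V_k(u,v)`. -/
def Vk (k : ℕ) (u v : ℝ) : Set (Fin k → ℝ) :=
  {t | (∀ i, t i ∈ Set.Ioo (0:ℝ) 1) ∧
    (∑ i ∈ Finset.univ.filter (fun i : Fin k => (i : ℕ) < k - 1), t i) < u - 1 ∧
    u - 1 < ∑ i, t i ∧ ∑ i, t i < u - v}

/-- The function `μ_k(u,v)`. -/
noncomputable def muk (k : ℕ) (u v : ℝ) : ℝ :=
  if k = 1 then
    u⁻¹ * (volume (Set.Ioo (0:ℝ) 1 ∩ Set.Ioo (u-1) (u-v))).toReal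
  else
    u⁻¹ * ∫ t in Vk k u v,
      ∏ j ∈ Finset.univ.filter (fun j : Fin k => (j : ℕ) < k - 1),
        (u - ∑ i ∈ Finset.univ.filter (fun i : Fin k => i ≤ j), t i)⁻¹

/-- `μ^{(κ)}(u,v) = ∑_{k ≥ 1} κ^k μ_k(u,v)`. -/
noncomputable def mukappa (κ u v : ℝ) : ℝ := ∑' k : ℕ, κ ^ (k+1) * muk (k+1) u v

noncomputable def Pk (k : ℕ) (u : ℝ) (t : Fin k → ℝ) : ℝ :=
  ∏ j ∈ Finset.univ.filter (fun j : Fin k => (j : ℕ) < k - 1),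
    (u - ∑ i ∈ Finset.univ.filter (fun i : Fin k => i ≤ j), t i)⁻¹


lemma measurableSet_Vk (k : ℕ) (u v : ℝ) : MeasurableSet (Vk k u v) := by
  have h1 : MeasurableSet {t : Fin k → ℝ | ∀ i, t i ∈ Set.Ioo (0:ℝ) 1} := by
    have : {t : Fin k → ℝ | ∀ i, t i ∈ Set.Ioo (0:ℝ) 1}
        = Set.pi Set.univ (fun _ => Set.Ioo (0:ℝ) 1) := by ext t; simp [Set.mem_pi]
    rw [this]; exact MeasurableSet.univ_pi (fun _ => measurableSet_Ioo)
  have hs : Measurable (fun t : Fin k → ℝ =>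
      ∑ i ∈ Finset.univ.filter (fun i : Fin k => (i : ℕ) < k - 1), t i) :=
    Finset.measurable_sum _ (fun i _ => measurable_pi_apply i)
  have ht : Measurable (fun t : Fin k → ℝ => ∑ i, t i) :=
    Finset.measurable_sum _ (fun i _ => measurable_pi_apply i)
  exact h1.inter ((measurableSet_lt hs measurable_const).inter
    ((measurableSet_lt measurable_const ht).inter (measurableSet_lt ht measurable_const)))

lemma measurable_Pk (k : ℕ) (u : ℝ) : Measurable (Pk k u) := by
  apply Finset.measurable_prod
  intro j _
  exact ((measurable_const.sub (Finset.measurable_sum _ (fun i _ => measurable_pi_apply i)))).inv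

lemma Vk_empty {k : ℕ} (hk : 2 ≤ k) {u v : ℝ} (hu : u ≤ 1) : Vk k u v = ∅ := by
  ext t
  simp only [Vk, Set.mem_setOf_eq, Set.mem_empty_iff_false, iff_false, not_and]
  intro h1 h2
  have h0 : (⟨0, by omega⟩ : Fin k) ∈ Finset.univ.filter (fun i : Fin k => (i : ℕ) < k - 1) := by
    simp only [Finset.mem_filter, Finset.mem_univ, true_and]
    omega
  have hpos : 0 < ∑ i ∈ Finset.univ.filter (fun i : Fin k => (i : ℕ) < k - 1), t i :=
    Finset.sum_pos (fun i _ => (h1 i).1) ⟨_, h0⟩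
  linarith

lemma sum_cons_filter {n : ℕ} (hn : 1 ≤ n) (x : ℝ) (y : Fin n → ℝ) :
    ∑ i ∈ Finset.univ.filter (fun i : Fin (n+1) => (i : ℕ) < (n+1) - 1), Fin.cons x y i
    = x + ∑ i ∈ Finset.univ.filter (fun i : Fin n => (i : ℕ) < n - 1), y i := by
  rw [Finset.sum_filter, Finset.sum_filter, Fin.sum_univ_succ]
  simp only [Fin.cons_zero, Fin.cons_succ, Fin.val_succ, Fin.val_zero]
  rw [if_pos (by omega)]
  congr 1
  exact Finset.sum_congr rfl (fun i _ => if_congr (by omega) rfl rfl)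

lemma sum_cons_le {n : ℕ} (x : ℝ) (y : Fin n → ℝ) (i : Fin n) :
    ∑ i' ∈ Finset.univ.filter (fun i' : Fin (n+1) => i' ≤ i.succ), Fin.cons x y i'
    = x + ∑ i' ∈ Finset.univ.filter (fun i' : Fin n => i' ≤ i), y i' := by
  rw [Finset.sum_filter, Finset.sum_filter, Fin.sum_univ_succ]
  simp only [Fin.cons_zero, Fin.cons_succ]
  rw [if_pos (Fin.zero_le _)]
  congr 1
  exact Finset.sum_congr rfl (fun i' _ => if_congr (by
    constructor
    · intro h; exact Fin.succ_le_succ_iff.mp h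
    · intro h; exact Fin.succ_le_succ_iff.mpr h) rfl rfl)

lemma cons_mem_Vk {n : ℕ} (hn : 1 ≤ n) (u v x : ℝ) (y : Fin n → ℝ) :
    Fin.cons x y ∈ Vk (n+1) u v ↔ x ∈ Set.Ioo (0:ℝ) 1 ∧ y ∈ Vk n (u - x) v := by
  simp only [Vk, Set.mem_setOf_eq, Fin.forall_fin_succ, Fin.cons_zero, Fin.cons_succ,
    Fin.sum_cons, sum_cons_filter hn]
  constructor
  · rintro ⟨⟨hx, hy⟩, h1, h2, h3⟩
    exact ⟨hx, hy, by linarith, by linarith, by linarith⟩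
  · rintro ⟨hx, hy, h1, h2, h3⟩
    exact ⟨⟨hx, hy⟩, by linarith, by linarith, by linarith⟩

lemma Pk_cons {n : ℕ} (hn : 1 ≤ n) (u x : ℝ) (y : Fin n → ℝ) :
    Pk (n+1) u (Fin.cons x y) = (u - x)⁻¹ * Pk n (u - x) y := by
  unfold Pk
  rw [Finset.prod_filter, Finset.prod_filter, Fin.prod_univ_succ]
  rw [if_pos (show ((0 : Fin (n+1)) : ℕ) < (n+1) - 1 by simp; omega)]
  have h0 : ∑ i ∈ Finset.univ.filter (fun i : Fin (n+1) => i ≤ 0), Fin.cons x y i = x := by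
    have : Finset.univ.filter (fun i : Fin (n+1) => i ≤ 0) = {0} := by
      ext i; simp [Fin.le_zero_iff]
    rw [this, Finset.sum_singleton, Fin.cons_zero]
  rw [h0]
  congr 1
  refine Finset.prod_congr rfl (fun i _ => ?_)
  · rw [sum_cons_le]
    have hiff : ((i.succ : ℕ) < (n+1) - 1) ↔ ((i : ℕ) < n - 1) := by
      simp only [Fin.val_succ]; omega
    by_cases h : (i : ℕ) < n - 1
    · rw [if_pos (hiff.mpr h), if_pos h, sub_sub]
    · rw [if_neg (fun hc => h (hiff.mp hc)), if_neg h]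


lemma muk_eq (k : ℕ) (hk : k ≠ 1) (u v : ℝ) :
    muk k u v = u⁻¹ * ∫ t in Vk k u v, Pk k u t := by
  rw [muk, if_neg hk]; rfl

lemma Pk_bounds {k : ℕ} {u v : ℝ} {t : Fin k → ℝ} (ht : t ∈ Vk k u v) :
    0 ≤ Pk k u t ∧ Pk k u t ≤ 1 := by
  obtain ⟨h1, h2, -, -⟩ := ht
  have key : ∀ j ∈ Finset.univ.filter (fun j : Fin k => (j : ℕ) < k - 1),
      (0:ℝ) ≤ (u - ∑ i ∈ Finset.univ.filter (fun i : Fin k => i ≤ j), t i)⁻¹ ∧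
      (u - ∑ i ∈ Finset.univ.filter (fun i : Fin k => i ≤ j), t i)⁻¹ ≤ 1 := by
    intro j hj
    simp only [Finset.mem_filter, Finset.mem_univ, true_and] at hj
    have hsub : Finset.univ.filter (fun i : Fin k => i ≤ j)
        ⊆ Finset.univ.filter (fun i : Fin k => (i : ℕ) < k - 1) := by
      intro i hi
      simp only [Finset.mem_filter, Finset.mem_univ, true_and] at hi ⊢
      exact lt_of_le_of_lt (Fin.le_iff_val_le_val.mp hi) hj
    have hle : ∑ i ∈ Finset.univ.filter (fun i : Fin k => i ≤ j), t i
        ≤ ∑ i ∈ Finset.univ.filter (fun i : Fin k => (i : ℕ) < k - 1), t i :=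
      Finset.sum_le_sum_of_subset_of_nonneg hsub (fun i _ _ => le_of_lt (h1 i).1)
    have h1' : (1:ℝ) ≤ u - ∑ i ∈ Finset.univ.filter (fun i : Fin k => i ≤ j), t i := by
      linarith
    constructor
    · positivity
    · rw [inv_le_one_iff₀]; right; exact h1'
  constructor
  · exact Finset.prod_nonneg (fun j hj => (key j hj).1)
  · exact Finset.prod_le_one (fun j hj => (key j hj).1) (fun j hj => (key j hj).2)

lemma Vk_one (s v : ℝ) (hs : 1 < s) :
    Vk 1 s v = (fun t : Fin 1 → ℝ => t 0) ⁻¹' (Set.Ioo (0:ℝ) 1 ∩ Set.Ioo (s-1) (s-v)) := by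
  ext t
  simp only [Vk, Set.mem_setOf_eq, Set.mem_preimage, Set.mem_inter_iff, Set.mem_Ioo,
    Fin.sum_univ_one]
  constructor
  · rintro ⟨h1, -, h3, h4⟩; exact ⟨h1 0, h3, h4⟩
  · rintro ⟨h1, h3, h4⟩
    refine ⟨fun i => by rw [Fin.eq_zero i]; exact h1, ?_, h3, h4⟩
    · simpa using sub_pos.mpr hs

lemma Vk_one_empty (s v : ℝ) (hs : ¬ 1 < s) : Vk 1 s v = ∅ := by
  ext t
  simp only [Vk, Set.mem_setOf_eq, Set.mem_empty_iff_false, iff_false, not_and]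
  intro _ h2
  simp only [Nat.sub_self] at h2
  have : ∑ i ∈ Finset.univ.filter (fun i : Fin 1 => (i : ℕ) < 0), t i = 0 := by
    simp
  rw [this] at h2; push_neg at hs; linarith

lemma inner_eq {n : ℕ} (hn : 1 ≤ n) {s : ℝ} (v : ℝ) (hs : 0 < s) :
    s⁻¹ * ∫ y in Vk n s v, Pk n s y = if 1 < s then muk n s v else 0 := by
  rcases eq_or_lt_of_le hn with h1 | h2
  · -- n = 1
    subst h1
    have hP : ∀ y : Fin 1 → ℝ, Pk 1 s y = 1 := by
      intro y; unfold Pk; simp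
    simp only [hP, muk, if_pos rfl]
    by_cases hs1 : 1 < s
    · rw [if_pos hs1, Vk_one s v hs1, setIntegral_const]
      have hpre : (fun t : Fin 1 → ℝ => t 0)
          = (MeasurableEquiv.funUnique (Fin 1) ℝ : (Fin 1 → ℝ) → ℝ) := by
        funext t; rfl
      rw [hpre, measureReal_def]
      erw [(volume_preserving_funUnique (Fin 1) ℝ).measure_preimage
        (s := Set.Ioo (0:ℝ) 1 ∩ Set.Ioo (s - 1) (s - v)) (measurableSet_Ioo.inter measurableSet_Ioo).nullMeasurableSet]
      simp
    · rw [if_neg hs1, Vk_one_empty s v hs1, Measure.restrict_empty, integral_zero_measure,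
        mul_zero]
  · by_cases hs1 : 1 < s
    · rw [if_pos hs1, muk_eq n (by omega)]
    · rw [if_neg hs1, Vk_empty (by omega) (by linarith), Measure.restrict_empty,
        integral_zero_measure, mul_zero]

lemma integrable_F {n : ℕ} (u v : ℝ) :
    Integrable ((Vk (n+1) u v).indicator (Pk (n+1) u)) := by
  have hmeas : Measurable ((Vk (n+1) u v).indicator (Pk (n+1) u)) :=
    (measurable_Pk _ u).indicator (measurableSet_Vk _ u v)
  have hg : Integrable ((Set.pi Set.univ fun _ : Fin (n+1) => Set.Ioo (0:ℝ) 1).indicator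
      (fun _ => (1:ℝ))) := by
    rw [integrable_indicator_iff (MeasurableSet.univ_pi fun _ => measurableSet_Ioo)]
    refine integrableOn_const ?_
    rw [volume_pi_pi]
    simp
  refine hg.mono' hmeas.aestronglyMeasurable (ae_of_all _ fun t => ?_)
  by_cases ht : t ∈ Vk (n+1) u v
  · rw [Set.indicator_of_mem ht]
    have hb := Pk_bounds ht
    have htbox : t ∈ Set.pi Set.univ fun _ : Fin (n+1) => Set.Ioo (0:ℝ) 1 := by
      intro i _; exact ht.1 i
    rw [Set.indicator_of_mem htbox, Real.norm_eq_abs, abs_of_nonneg hb.1]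
    exact hb.2
  · rw [Set.indicator_of_notMem ht, norm_zero]
    exact Set.indicator_apply_nonneg (fun _ => zero_le_one)

lemma main_u_gt_one {n : ℕ} (hn : 1 ≤ n) (u v : ℝ) (hu1 : 1 < u) :
    u * muk (n+1) u v = ∫ s in (max 1 (u-1))..u, muk n s v := by
  have hu0 : (0:ℝ) < u := by linarith
  set F := (Vk (n+1) u v).indicator (Pk (n+1) u) with hF
  -- Step A
  have hA : u * muk (n+1) u v = ∫ t, F t := by
    rw [muk_eq _ (by omega), ← mul_assoc, mul_inv_cancel₀ (ne_of_gt hu0), one_mul,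
      ← integral_indicator (measurableSet_Vk _ u v)]
  -- Step C : transfer to product space
  set e := MeasurableEquiv.piFinSuccAbove (fun _ : Fin (n+1) => ℝ) 0 with he
  have mp : MeasurePreserving e volume volume := by
    have h := measurePreserving_piFinSuccAbove (fun _ : Fin (n+1) => (volume : Measure ℝ)) 0
    rw [← (volume_pi : (volume : Measure (Fin n → ℝ)) = _), ← Measure.volume_eq_prod,
      ← (volume_pi : (volume : Measure (Fin (n+1) → ℝ)) = _)] at h
    exact h
  have mps := MeasurePreserving.symm e mp
  have hsymm : ∀ p : ℝ × (Fin n → ℝ), e.symm p = Fin.cons p.1 p.2 := by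
    intro p
    simp only [he, MeasurableEquiv.piFinSuccAbove_symm_apply]
    exact Fin.insertNth_zero' p.1 p.2
  have hC : ∫ t, F t = ∫ p : ℝ × (Fin n → ℝ), F (Fin.cons p.1 p.2) := by
    rw [← mps.integral_comp e.symm.measurableEmbedding F]
    exact integral_congr_ae (ae_of_all _ fun p => congrArg F (hsymm p))
  -- Step D : Fubini
  have hint : Integrable (fun p : ℝ × (Fin n → ℝ) => F (Fin.cons p.1 p.2)) := by
    have heq : (fun p : ℝ × (Fin n → ℝ) => F (Fin.cons p.1 p.2)) = F ∘ e.symm :=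
      funext fun p => (congrArg F (hsymm p)).symm
    rw [heq]
    exact (mps.integrable_comp_emb e.symm.measurableEmbedding).mpr (integrable_F u v)
  have hD : ∫ p : ℝ × (Fin n → ℝ), F (Fin.cons p.1 p.2)
      = ∫ x : ℝ, ∫ y : Fin n → ℝ, F (Fin.cons x y) :=
    integral_prod _ hint
  -- Step E : inner integral
  have hE : ∀ x : ℝ, (∫ y : Fin n → ℝ, F (Fin.cons x y)) =
      (Set.Ioo (0:ℝ) (min 1 (u-1))).indicator (fun x => muk n (u-x) v) x := by
    intro x
    by_cases hx : x ∈ Set.Ioo (0:ℝ) 1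
    · have hxu : 0 < u - x := by obtain ⟨-, h2⟩ := hx; linarith
      have hfun : ∀ y : Fin n → ℝ, F (Fin.cons x y)
          = (Vk n (u-x) v).indicator (fun y => (u-x)⁻¹ * Pk n (u-x) y) y := by
        intro y
        by_cases hy : y ∈ Vk n (u-x) v
        · rw [hF, Set.indicator_of_mem ((cons_mem_Vk hn u v x y).mpr ⟨hx, hy⟩),
            Set.indicator_of_mem hy, Pk_cons hn]
        · rw [hF, Set.indicator_of_notMem (fun hc => hy ((cons_mem_Vk hn u v x y).mp hc).2),
            Set.indicator_of_notMem hy]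
      have : (∫ y : Fin n → ℝ, F (Fin.cons x y)) = if 1 < u - x then muk n (u-x) v else 0 := by
        calc (∫ y : Fin n → ℝ, F (Fin.cons x y))
            = ∫ y : Fin n → ℝ, (Vk n (u-x) v).indicator (fun y => (u-x)⁻¹ * Pk n (u-x) y) y :=
              integral_congr_ae (ae_of_all _ hfun)
          _ = ∫ y in Vk n (u-x) v, (u-x)⁻¹ * Pk n (u-x) y :=
              integral_indicator (measurableSet_Vk n (u-x) v)
          _ = (u-x)⁻¹ * ∫ y in Vk n (u-x) v, Pk n (u-x) y := integral_const_mul _ _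
          _ = if 1 < u - x then muk n (u-x) v else 0 := inner_eq hn v hxu
      rw [this]
      by_cases hx1 : 1 < u - x
      · rw [if_pos hx1, Set.indicator_of_mem]
        exact ⟨hx.1, lt_min hx.2 (by linarith)⟩
      · rw [if_neg hx1, Set.indicator_of_notMem]
        intro hc
        exact hx1 (by have := hc.2; have := min_le_right (1:ℝ) (u-1); linarith [lt_of_lt_of_le hc.2 (min_le_right (1:ℝ) (u-1))])
    · have hzero : ∀ y : Fin n → ℝ, F (Fin.cons x y) = 0 := fun y =>
        Set.indicator_of_notMem (fun hc => hx ((cons_mem_Vk hn u v x y).mp hc).1) _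
      rw [integral_congr_ae (ae_of_all _ hzero), integral_zero,
        Set.indicator_of_notMem]
      intro hc
      exact hx ⟨hc.1, lt_of_lt_of_le hc.2 (min_le_left _ _)⟩
  -- Step F : change of variables
  have hm : 0 < min 1 (u-1) := lt_min one_pos (by linarith)
  have hmax : u - min 1 (u-1) = max 1 (u-1) := by
    rcases le_total (1:ℝ) (u-1) with h | h
    · rw [min_eq_left h, max_eq_right h]
    · rw [min_eq_right h, max_eq_left h]; ring
  calc u * muk (n+1) u v
      = ∫ x : ℝ, (Set.Ioo (0:ℝ) (min 1 (u-1))).indicator (fun x => muk n (u-x) v) x := by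
        rw [hA, hC, hD]; exact integral_congr_ae (ae_of_all _ hE)
    _ = ∫ x in Set.Ioo (0:ℝ) (min 1 (u-1)), muk n (u-x) v := integral_indicator measurableSet_Ioo
    _ = ∫ x in (0:ℝ)..(min 1 (u-1)), muk n (u-x) v := by
        rw [intervalIntegral.integral_of_le hm.le, integral_Ioc_eq_integral_Ioo]
    _ = ∫ s in (u - min 1 (u-1))..(u - 0), muk n s v :=
        intervalIntegral.integral_comp_sub_left (fun s => muk n s v) u
    _ = ∫ s in (max 1 (u-1))..u, muk n s v := by rw [hmax, sub_zero]

/-- Recurrence for `μ_k` (Proposition 3.2, (3.2)). -/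
theorem muk_recurrence (u v : ℝ) (hu : 0 < u) (hv0 : 0 ≤ v) (hv : v < min 1 u)
    (k : ℕ) (hk : 2 ≤ k) :
    (u ≤ 1 → u * muk k u v = 0) ∧
    (1 < u → u * muk k u v = ∫ s in (max 1 (u-1))..u, muk (k-1) s v) := by
  constructor
  · intro hu1
    rw [muk_eq k (by omega) u v, Vk_empty hk hu1, Measure.restrict_empty,
      integral_zero_measure, mul_zero, mul_zero]
  · intro hu1
    obtain ⟨n, rfl⟩ : ∃ n, k = n + 1 := ⟨k-1, by omega⟩
    have hn : 1 ≤ n := by omega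
    rw [Nat.add_sub_cancel]
    exact main_u_gt_one hn u v hu1
end

section
/- Let u > 0, 0 ≤ v < min(1,u) and κ > 0. Then the series ∑_{k≥1} κ^k μ_k(u,v) converges; moreover ∑_{k=1}^∞ κ^k μ_k(u,v) ≤ κ if 0 < u ≤ 1, and ∑_{k=1}^∞ κ^k μ_k(u,v) ≤ (1+u)^κ if u > 1. -/
open MeasureTheory

open Finset
open scoped ENNReal

namespace MuAux


noncomputable def pfun (m : ℕ) (a : ℝ) (t : Fin m → ℝ) : ℝ≥0∞ :=
  ∏ j, ENNReal.ofReal ((a - ∑ i ∈ Finset.univ.filter (fun i => i ≤ j), t i)⁻¹)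

def Lset (m : ℕ) (c : ℝ) : Set (Fin m → ℝ) := {t | (∀ i, 0 < t i) ∧ ∑ i, t i < c}

noncomputable def Lint (m : ℕ) (a c : ℝ) : ℝ≥0∞ :=
  ∫⁻ t, (Lset m c).indicator (pfun m a) t

lemma measurable_pfun (m : ℕ) (a : ℝ) : Measurable (pfun m a) := by
  apply Finset.measurable_prod
  intro j _
  exact ENNReal.measurable_ofReal.comp
    ((measurable_const.sub (Finset.measurable_sum _ (fun i _ => measurable_pi_apply i))).inv)

lemma measurableSet_Lset (m : ℕ) (c : ℝ) : MeasurableSet (Lset m c) := by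
  have h1 : MeasurableSet {t : Fin m → ℝ | ∀ i, 0 < t i} := by
    have : {t : Fin m → ℝ | ∀ i, 0 < t i} = ⋂ i, (fun t => t i) ⁻¹' Set.Ioi 0 := by
      ext t; simp [Set.mem_iInter]
    rw [this]
    exact MeasurableSet.iInter fun i => (measurable_pi_apply i) measurableSet_Ioi
  have h2 : MeasurableSet {t : Fin m → ℝ | ∑ i, t i < c} :=
    (Finset.measurable_sum _ (fun i _ => measurable_pi_apply i)) measurableSet_Iio
  exact h1.inter h2

lemma Lset_eq_empty {m : ℕ} {c : ℝ} (hc : c ≤ 0) : Lset m c = ∅ := by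
  ext t
  simp only [Lset, Set.mem_setOf_eq, Set.mem_empty_iff_false, iff_false]
  rintro ⟨hpos, hsum⟩
  have : (0:ℝ) ≤ ∑ i, t i := Finset.sum_nonneg fun i _ => (hpos i).le
  linarith

lemma Lint_of_nonpos {m : ℕ} {a c : ℝ} (hc : c ≤ 0) : Lint m a c = 0 := by
  simp [Lint, Lset_eq_empty hc]

lemma Lint_zero_le (a c : ℝ) : Lint 0 a c ≤ 1 := by
  have h : ∀ t : Fin 0 → ℝ, (Lset 0 c).indicator (pfun 0 a) t ≤ 1 := by
    intro t
    have : pfun 0 a t = 1 := by simp [pfun]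
    calc (Lset 0 c).indicator (pfun 0 a) t ≤ pfun 0 a t := Set.indicator_le_self _ _ t
    _ = 1 := this
  calc Lint 0 a c ≤ ∫⁻ _ : Fin 0 → ℝ, 1 := lintegral_mono h
  _ = volume (Set.univ : Set (Fin 0 → ℝ)) := lintegral_one
  _ = 1 := by rw [volume_pi, Measure.pi_univ]; simp



lemma sum_filter_le_zero {m : ℕ} (x : ℝ) (s : Fin m → ℝ) :
    ∑ i ∈ univ.filter (fun i : Fin (m+1) => i ≤ 0), (Fin.cons x s) i = x := by
  rw [Finset.sum_filter, Fin.sum_univ_succ]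
  simp [Fin.le_zero_iff, Fin.succ_ne_zero]

lemma sum_filter_le_succ {m : ℕ} (x : ℝ) (s : Fin m → ℝ) (j : Fin m) :
    ∑ i ∈ univ.filter (fun i : Fin (m+1) => i ≤ j.succ), (Fin.cons x s) i
      = x + ∑ i ∈ univ.filter (fun i : Fin m => i ≤ j), s i := by
  rw [Finset.sum_filter, Finset.sum_filter, Fin.sum_univ_succ]
  simp [Fin.succ_le_succ_iff, Fin.zero_le]

lemma pfun_cons {m : ℕ} (a x : ℝ) (s : Fin m → ℝ) :
    pfun (m+1) a (Fin.cons x s) = ENNReal.ofReal ((a - x)⁻¹) * pfun m (a - x) s := by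
  rw [pfun, Fin.prod_univ_succ, sum_filter_le_zero, pfun]
  congr 1
  apply Finset.prod_congr rfl
  intro j _
  rw [sum_filter_le_succ]
  ring_nf

lemma cons_mem_Lset_iff {m : ℕ} {c x : ℝ} {s : Fin m → ℝ} :
    Fin.cons x s ∈ Lset (m+1) c ↔ 0 < x ∧ s ∈ Lset m (c - x) := by
  simp only [Lset, Set.mem_setOf_eq, Fin.forall_fin_succ, Fin.cons_zero, Fin.cons_succ,
    Fin.sum_univ_succ]
  constructor
  · rintro ⟨⟨hx, hs⟩, hsum⟩; exact ⟨hx, hs, by linarith⟩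
  · rintro ⟨hx, hs, hsum⟩; exact ⟨⟨hx, hs⟩, by linarith⟩



lemma Lint_succ (m : ℕ) (a c : ℝ) :
    Lint (m+1) a c = ∫⁻ x : ℝ, (Set.Ioi (0:ℝ)).indicator
      (fun x => ENNReal.ofReal ((a - x)⁻¹) * Lint m (a - x) (c - x)) x := by
  classical
  set T : Set (ℝ × (Fin m → ℝ)) := {q | (∀ i, 0 < q.2 i) ∧ ∑ i, q.2 i < c - q.1} with hT
  have hTmeas : MeasurableSet T := by
    have h1 : MeasurableSet {q : ℝ × (Fin m → ℝ) | ∀ i, 0 < q.2 i} := by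
      have : {q : ℝ × (Fin m → ℝ) | ∀ i, 0 < q.2 i}
          = ⋂ i, (fun q : ℝ × (Fin m → ℝ) => q.2 i) ⁻¹' Set.Ioi 0 := by
        ext q; simp [Set.mem_iInter]
      rw [this]
      exact MeasurableSet.iInter fun i =>
        ((measurable_pi_apply i).comp measurable_snd) measurableSet_Ioi
    have h2 : MeasurableSet {q : ℝ × (Fin m → ℝ) | ∑ i, q.2 i < c - q.1} :=
      measurableSet_lt (Finset.measurable_sum _ fun i _ =>
        (measurable_pi_apply i).comp measurable_snd)
        (measurable_const.sub measurable_fst)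
    exact h1.inter h2
  set Ψ : ℝ × (Fin m → ℝ) → ℝ≥0∞ := fun p =>
    ((Set.Ioi (0:ℝ)).indicator (fun x => ENNReal.ofReal ((a - x)⁻¹)) p.1) *
      (T.indicator (fun q => pfun m (a - q.1) q.2) p) with hΨ
  have hΨmeas : Measurable Ψ := by
    apply Measurable.mul
    · have hf : Measurable fun x : ℝ => ENNReal.ofReal ((a - x)⁻¹) :=
        ENNReal.measurable_ofReal.comp ((measurable_const.sub measurable_id).inv)
      exact (hf.indicator measurableSet_Ioi).comp measurable_fst
    · refine Measurable.indicator ?_ hTmeas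
      apply Finset.measurable_prod
      intro j _
      refine ENNReal.measurable_ofReal.comp ?_
      exact ((measurable_const.sub measurable_fst).sub
        (Finset.measurable_sum _ fun i _ =>
          (measurable_pi_apply i).comp measurable_snd)).inv
  have key : ∀ x (s : Fin m → ℝ),
      (Lset (m+1) c).indicator (pfun (m+1) a) (Fin.cons x s) = Ψ (x, s) := by
    intro x s
    by_cases hx : 0 < x
    · have hx' : x ∈ Set.Ioi (0:ℝ) := hx
      by_cases hs : s ∈ Lset m (c - x)
      · have hsT : (x, s) ∈ T := hs
        rw [Set.indicator_of_mem (cons_mem_Lset_iff.2 ⟨hx, hs⟩), pfun_cons, hΨ]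
        simp only
        rw [Set.indicator_of_mem hx', Set.indicator_of_mem hsT]
      · have hsT : (x, s) ∉ T := hs
        rw [Set.indicator_of_notMem (fun h => hs (cons_mem_Lset_iff.1 h).2), hΨ]
        simp only
        rw [Set.indicator_of_notMem hsT, mul_zero]
    · have hx' : x ∉ Set.Ioi (0:ℝ) := hx
      rw [Set.indicator_of_notMem (fun h => hx (cons_mem_Lset_iff.1 h).1), hΨ]
      simp only
      rw [Set.indicator_of_notMem hx', zero_mul]
  set e := MeasurableEquiv.piFinSuccAbove (fun _ : Fin (m+1) => ℝ) 0 with he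
  have hmp : MeasurePreserving e volume volume :=
    volume_preserving_piFinSuccAbove (fun _ : Fin (m+1) => ℝ) 0
  have hcomp : ∀ t : Fin (m+1) → ℝ,
      (Lset (m+1) c).indicator (pfun (m+1) a) t = Ψ (e t) := by
    intro t
    calc (Lset (m+1) c).indicator (pfun (m+1) a) t
        = (Lset (m+1) c).indicator (pfun (m+1) a) (Fin.cons (t 0) (Fin.tail t)) := by
          rw [Fin.cons_self_tail]
      _ = Ψ (t 0, Fin.tail t) := key _ _
      _ = Ψ (e t) := rfl
  calc Lint (m+1) a c = ∫⁻ t, Ψ (e t) := by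
        rw [Lint]; exact lintegral_congr hcomp
    _ = ∫⁻ p, Ψ p ∂(volume : Measure (ℝ × (Fin m → ℝ))) := hmp.lintegral_comp hΨmeas
    _ = ∫⁻ x, ∫⁻ s, Ψ (x, s) := by
        rw [Measure.volume_eq_prod, lintegral_prod _ hΨmeas.aemeasurable]
    _ = _ := by
        apply lintegral_congr
        intro x
        by_cases hx : 0 < x
        · have hx' : x ∈ Set.Ioi (0:ℝ) := hx
          rw [Set.indicator_of_mem hx']
          have hpt : ∀ s : Fin m → ℝ, Ψ (x, s)
              = ENNReal.ofReal ((a - x)⁻¹) * (Lset m (c - x)).indicator (pfun m (a - x)) s := by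
            intro s
            rw [hΨ]
            simp only
            rw [Set.indicator_of_mem hx']
            by_cases hs : s ∈ Lset m (c - x)
            · have hsT : (x, s) ∈ T := hs
              rw [Set.indicator_of_mem hsT, Set.indicator_of_mem hs]
            · have hsT : (x, s) ∉ T := hs
              rw [Set.indicator_of_notMem hsT, Set.indicator_of_notMem hs]
          rw [lintegral_congr hpt, lintegral_const_mul' _ _ ENNReal.ofReal_ne_top, Lint]
        · have hx' : x ∉ Set.Ioi (0:ℝ) := hx
          rw [Set.indicator_of_notMem hx']
          have hpt : ∀ s : Fin m → ℝ, Ψ (x, s) = 0 := by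
            intro s
            rw [hΨ]
            simp only
            rw [Set.indicator_of_notMem hx', zero_mul]
          rw [lintegral_congr hpt, lintegral_zero]



lemma Lint_le (m : ℕ) : ∀ a c : ℝ, 0 ≤ c → c < a →
    Lint m a c ≤ ENNReal.ofReal ((Real.log a - Real.log (a - c))^m / m.factorial) := by
  induction m with
  | zero =>
    intro a c h0 hca
    simpa using Lint_zero_le a c
  | succ m ih =>
    intro a c h0 hca
    have hac : 0 < a - c := by linarith
    rw [Lint_succ]
    set g0 : ℝ → ℝ := fun x =>
      (a - x)⁻¹ * ((Real.log (a - x) - Real.log (a - c))^m / m.factorial) with hg0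
    have key : ∀ x : ℝ, (Set.Ioi (0:ℝ)).indicator
        (fun x => ENNReal.ofReal ((a - x)⁻¹) * Lint m (a - x) (c - x)) x
        ≤ (Set.Ioo (0:ℝ) c).indicator (fun x => ENNReal.ofReal (g0 x)) x := by
      intro x
      by_cases hx0 : 0 < x
      · have hx' : x ∈ Set.Ioi (0:ℝ) := hx0
        rw [Set.indicator_of_mem hx']
        by_cases hxc : x < c
        · have hx2 : x ∈ Set.Ioo (0:ℝ) c := ⟨hx0, hxc⟩
          rw [Set.indicator_of_mem hx2]
          have h1 : Lint m (a - x) (c - x)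
              ≤ ENNReal.ofReal ((Real.log (a - x) - Real.log ((a - x) - (c - x)))^m
                  / m.factorial) := ih (a - x) (c - x) (by linarith) (by linarith)
          have h2 : (a - x) - (c - x) = a - c := by ring
          rw [h2] at h1
          calc ENNReal.ofReal ((a - x)⁻¹) * Lint m (a - x) (c - x)
              ≤ ENNReal.ofReal ((a - x)⁻¹) * ENNReal.ofReal
                ((Real.log (a - x) - Real.log (a - c))^m / m.factorial) := by
                exact mul_le_mul_right h1 _
            _ = ENNReal.ofReal (g0 x) := by
                have hax : 0 < a - x := by linarith
                rw [hg0, ← ENNReal.ofReal_mul (by positivity)]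
        · have : c - x ≤ 0 := by linarith
          rw [Lint_of_nonpos this, mul_zero]
          exact zero_le
      · have hx' : x ∉ Set.Ioi (0:ℝ) := hx0
        rw [Set.indicator_of_notMem hx']
        exact zero_le
    have hcont : ContinuousOn g0 (Set.Icc 0 c) := by
      have hne : ∀ x ∈ Set.Icc (0:ℝ) c, a - x ≠ 0 := by
        intro x hx
        have := hx.2
        intro h; nlinarith [hx.2]
      have hsub : ContinuousOn (fun x : ℝ => a - x) (Set.Icc 0 c) :=
        (continuous_const.sub continuous_id).continuousOn
      exact (hsub.inv₀ hne).mul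
        ((((hsub.log hne).sub continuousOn_const).pow m).div_const _)
    have hInt : IntervalIntegrable g0 volume 0 c := by
      apply ContinuousOn.intervalIntegrable
      rwa [Set.uIcc_of_le h0]
    have hftc : ∫ x in (0:ℝ)..c, g0 x
        = (Real.log a - Real.log (a - c))^(m+1) / ((m+1) * m.factorial) := by
      have hderiv : ∀ x ∈ Set.uIcc (0:ℝ) c,
          HasDerivAt (fun y => -((Real.log (a - y) - Real.log (a - c))^(m+1))
            / ((m+1) * m.factorial)) (g0 x) x := by
        intro x hx
        rw [Set.uIcc_of_le h0] at hx
        have hax : 0 < a - x := by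
          have := hx.2; linarith
        have hlin : HasDerivAt (fun y : ℝ => a - y) (-1) x :=
          (hasDerivAt_id x).const_sub a
        have hlog : HasDerivAt (fun y : ℝ => Real.log (a - y)) ((a - x)⁻¹ * (-1)) x :=
          (Real.hasDerivAt_log hax.ne').comp x hlin
        have h1 : HasDerivAt (fun y : ℝ => Real.log (a - y) - Real.log (a - c))
            ((a - x)⁻¹ * (-1)) x := hlog.sub_const _
        have h2 := (h1.pow (m+1)).neg.div_const ((m+1) * m.factorial : ℝ)
        refine HasDerivAt.congr_deriv h2 ?_
        rw [hg0]
        have hm : (m.factorial : ℝ) ≠ 0 := Nat.cast_ne_zero.2 m.factorial_ne_zero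
        field_simp
        simp only [Nat.add_sub_cancel_left, Nat.add_sub_cancel, Nat.cast_add, Nat.cast_one]
      rw [intervalIntegral.integral_eq_sub_of_hasDerivAt hderiv hInt]
      have h3 : Real.log (a - c) - Real.log (a - c) = 0 := sub_self _
      rw [h3]
      simp [zero_pow (Nat.succ_ne_zero m)]
      ring
    have hnn : ∀ x ∈ Set.Ioo (0:ℝ) c, 0 ≤ g0 x := by
      intro x hx
      have hax : 0 < a - x := by have := hx.2; linarith
      have hlog : Real.log (a - c) ≤ Real.log (a - x) :=
        Real.log_le_log hac (by linarith [hx.2])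
      have : (0:ℝ) ≤ Real.log (a - x) - Real.log (a - c) := by linarith
      positivity
    calc ∫⁻ x, (Set.Ioi (0:ℝ)).indicator
          (fun x => ENNReal.ofReal ((a - x)⁻¹) * Lint m (a - x) (c - x)) x
        ≤ ∫⁻ x, (Set.Ioo (0:ℝ) c).indicator (fun x => ENNReal.ofReal (g0 x)) x :=
          lintegral_mono key
      _ = ∫⁻ x in Set.Ioo 0 c, ENNReal.ofReal (g0 x) :=
          lintegral_indicator measurableSet_Ioo _
      _ = ENNReal.ofReal (∫ x in Set.Ioo 0 c, g0 x) := by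
          rw [ofReal_integral_eq_lintegral_ofReal]
          · exact hInt.1.mono_set Set.Ioo_subset_Ioc_self
          · exact (ae_restrict_iff' measurableSet_Ioo).2 (Filter.Eventually.of_forall hnn)
      _ ≤ ENNReal.ofReal ((Real.log a - Real.log (a - c))^(m+1) / (m+1).factorial) := by
          apply ENNReal.ofReal_le_ofReal
          rw [← MeasureTheory.integral_Ioc_eq_integral_Ioo,
            ← intervalIntegral.integral_of_le h0, hftc, Nat.factorial_succ]
          apply le_of_eq
          congr 1
          push_cast
          ring

lemma sum_filter_le_castSucc {n : ℕ} (t : Fin (n+1) → ℝ) (j : Fin n) :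
    ∑ i ∈ univ.filter (fun i : Fin (n+1) => i ≤ j.castSucc), t i
      = ∑ i ∈ univ.filter (fun i : Fin n => i ≤ j), t i.castSucc := by
  rw [Finset.sum_filter, Finset.sum_filter, Fin.sum_univ_castSucc]
  simp [Fin.castSucc_le_castSucc_iff, (Fin.castSucc_lt_last j).not_ge]

lemma sum_filter_lt_castSucc {n : ℕ} (t : Fin (n+1) → ℝ) :
    ∑ i ∈ univ.filter (fun i : Fin (n+1) => (i:ℕ) < n), t i = ∑ i : Fin n, t i.castSucc := by
  rw [Finset.sum_filter, Fin.sum_univ_castSucc]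
  simp

lemma prod_filter_lt_castSucc {n : ℕ} (f : Fin (n+1) → ℝ≥0∞) :
    ∏ j ∈ univ.filter (fun j : Fin (n+1) => (j:ℕ) < n), f j = ∏ j : Fin n, f j.castSucc := by
  rw [Finset.prod_filter, Fin.prod_univ_castSucc]
  simp

lemma abs_integral_Vk_le (m : ℕ) (u v : ℝ) (hu : 1 < u) :
    |∫ t in Vk (m+2) u v, ∏ j ∈ Finset.univ.filter (fun j : Fin (m+2) => (j:ℕ) < (m+2) - 1),
      (u - ∑ i ∈ Finset.univ.filter (fun i : Fin (m+2) => i ≤ j), t i)⁻¹|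
      ≤ (Real.log u)^(m+1) / (m+1).factorial := by
  classical
  set F : (Fin (m+2) → ℝ) → ℝ := fun t =>
    ∏ j ∈ Finset.univ.filter (fun j : Fin (m+2) => (j:ℕ) < (m+2) - 1),
      (u - ∑ i ∈ Finset.univ.filter (fun i : Fin (m+2) => i ≤ j), t i)⁻¹ with hF
  set W : Set (Fin (m+2) → ℝ) := {t | (∀ i, t i ∈ Set.Ioo (0:ℝ) 1) ∧
    ∑ i ∈ univ.filter (fun i : Fin (m+2) => (i:ℕ) < m+1), t i < u - 1} with hW
  have hVW : Vk (m+2) u v ⊆ W := by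
    rintro t ⟨h1, h2, -⟩
    exact ⟨h1, h2⟩
  have hWmeas : MeasurableSet W := by
    have h1 : MeasurableSet {t : Fin (m+2) → ℝ | ∀ i, t i ∈ Set.Ioo (0:ℝ) 1} := by
      have : {t : Fin (m+2) → ℝ | ∀ i, t i ∈ Set.Ioo (0:ℝ) 1}
          = ⋂ i, (fun t : Fin (m+2) → ℝ => t i) ⁻¹' Set.Ioo 0 1 := by
        ext q; simp [Set.mem_iInter]
      rw [this]
      exact MeasurableSet.iInter fun i => (measurable_pi_apply i) measurableSet_Ioo
    have h2 : MeasurableSet {t : Fin (m+2) → ℝ |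
        ∑ i ∈ univ.filter (fun i : Fin (m+2) => (i:ℕ) < m+1), t i < u - 1} :=
      measurableSet_lt (Finset.measurable_sum _ fun i _ => measurable_pi_apply i)
        measurable_const
    exact h1.inter h2
  set G : (Fin (m+1) → ℝ) → ℝ≥0∞ := (Lset (m+1) (u-1)).indicator (pfun (m+1) u) with hG
  set H : ℝ → ℝ≥0∞ := (Set.Ioo (0:ℝ) 1).indicator 1 with hH
  have hkey : ∀ t : Fin (m+2) → ℝ,
      W.indicator (fun t => ENNReal.ofReal ‖F t‖) t
        ≤ H (t (Fin.last (m+1))) * G (fun j => t j.castSucc) := by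
    intro t
    by_cases htW : t ∈ W
    · obtain ⟨hIoo, hsum⟩ := id htW
      -- each partial sum is below u - 1
      have hS : ∀ j : Fin (m+2), (j:ℕ) < m+1 →
          ∑ i ∈ univ.filter (fun i : Fin (m+2) => i ≤ j), t i ≤
            ∑ i ∈ univ.filter (fun i : Fin (m+2) => (i:ℕ) < m+1), t i := by
        intro j hj
        apply Finset.sum_le_sum_of_subset_of_nonneg
        · intro i hi
          simp only [Finset.mem_filter, Finset.mem_univ, true_and] at hi ⊢
          exact lt_of_le_of_lt (by exact_mod_cast hi) hj
        · intro i _ _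
          exact (hIoo i).1.le
      have hfac : ∀ j : Fin (m+2), (j:ℕ) < m+1 →
          (0:ℝ) ≤ (u - ∑ i ∈ univ.filter (fun i : Fin (m+2) => i ≤ j), t i)⁻¹ := by
        intro j hj
        have := hS j hj
        have : (0:ℝ) < u - ∑ i ∈ univ.filter (fun i : Fin (m+2) => i ≤ j), t i := by
          linarith
        positivity
      rw [Set.indicator_of_mem htW]
      have hFnn : 0 ≤ F t := by
        rw [hF]
        apply Finset.prod_nonneg
        intro j hj
        simp only [Finset.mem_filter, Finset.mem_univ, true_and] at hj
        exact hfac j (by omega)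
      have hnorm : ENNReal.ofReal ‖F t‖ = pfun (m+1) u (fun j => t j.castSucc) := by
        rw [Real.norm_eq_abs, abs_of_nonneg hFnn, hF]
        have h1 : ENNReal.ofReal (∏ j ∈ Finset.univ.filter
            (fun j : Fin (m+2) => (j:ℕ) < (m+2) - 1),
            (u - ∑ i ∈ Finset.univ.filter (fun i : Fin (m+2) => i ≤ j), t i)⁻¹)
            = ∏ j ∈ Finset.univ.filter (fun j : Fin (m+2) => (j:ℕ) < (m+2) - 1),
              ENNReal.ofReal ((u - ∑ i ∈ Finset.univ.filter
                (fun i : Fin (m+2) => i ≤ j), t i)⁻¹) := by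
          apply ENNReal.ofReal_prod_of_nonneg
          intro j hj
          simp only [Finset.mem_filter, Finset.mem_univ, true_and] at hj
          exact hfac j (by omega)
        rw [h1]
        have h2 : ((m+2) - 1) = m + 1 := rfl
        simp only [h2]
        rw [prod_filter_lt_castSucc (fun j : Fin (m+2) =>
          ENNReal.ofReal ((u - ∑ i ∈ Finset.univ.filter
            (fun i : Fin (m+2) => i ≤ j), t i)⁻¹))]
        rw [pfun]
        apply Finset.prod_congr rfl
        intro j _
        rw [sum_filter_le_castSucc]
      rw [hnorm]
      have hHone : H (t (Fin.last (m+1))) = 1 := by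
        rw [hH, Set.indicator_of_mem (hIoo _)]
        rfl
      have hGmem : (fun j => t j.castSucc) ∈ Lset (m+1) (u-1) := by
        constructor
        · intro i; exact (hIoo _).1
        · rw [← sum_filter_lt_castSucc]
          exact hsum
      rw [hHone, hG, Set.indicator_of_mem hGmem, one_mul]
    · rw [Set.indicator_of_notMem htW]
      exact zero_le
  have hGmeas : Measurable G := (measurable_pfun _ _).indicator (measurableSet_Lset _ _)
  have hHmeas : Measurable H := measurable_const.indicator measurableSet_Ioo
  set e := MeasurableEquiv.piFinSuccAbove (fun _ : Fin (m+2) => ℝ) (Fin.last (m+1)) with he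
  have hmp : MeasurePreserving e volume volume :=
    volume_preserving_piFinSuccAbove (fun _ : Fin (m+2) => ℝ) (Fin.last (m+1))
  calc |∫ t in Vk (m+2) u v, F t|
      ≤ (∫⁻ t in Vk (m+2) u v, ENNReal.ofReal ‖F t‖).toReal := by
        rw [← Real.norm_eq_abs]
        exact norm_integral_le_lintegral_norm F
    _ ≤ ((ENNReal.ofReal ((Real.log u)^(m+1) / (m+1).factorial))).toReal := by
        apply ENNReal.toReal_mono ENNReal.ofReal_ne_top
        calc ∫⁻ t in Vk (m+2) u v, ENNReal.ofReal ‖F t‖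
            ≤ ∫⁻ t in W, ENNReal.ofReal ‖F t‖ := lintegral_mono_set hVW
          _ = ∫⁻ t, W.indicator (fun t => ENNReal.ofReal ‖F t‖) t :=
              (lintegral_indicator hWmeas _).symm
          _ ≤ ∫⁻ t, H (t (Fin.last (m+1))) * G (fun j => t j.castSucc) :=
              lintegral_mono hkey
          _ = ∫⁻ t, (fun p : ℝ × (Fin (m+1) → ℝ) => H p.1 * G p.2) (e t) := by
              apply lintegral_congr
              intro t
              have : (fun j => t j.castSucc) = fun j => t ((Fin.last (m+1)).succAbove j) := by
                funext j
                rw [Fin.succAbove_last_apply]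
              rw [this]
              rfl
          _ = ∫⁻ p : ℝ × (Fin (m+1) → ℝ), H p.1 * G p.2 := by
              exact hmp.lintegral_comp ((hHmeas.comp measurable_fst).mul
                (hGmeas.comp measurable_snd))
          _ = (∫⁻ x, H x) * (∫⁻ s, G s) := by
              rw [Measure.volume_eq_prod]
              exact lintegral_prod_mul hHmeas.aemeasurable hGmeas.aemeasurable
          _ ≤ 1 * ENNReal.ofReal ((Real.log u)^(m+1) / (m+1).factorial) := by
              apply mul_le_mul'
              · rw [hH, lintegral_indicator measurableSet_Ioo]
                simp [Real.volume_Ioo]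
              · have := Lint_le (m+1) u (u-1) (by linarith) (by linarith)
                have h2 : u - (u - 1) = 1 := by ring
                rw [h2, Real.log_one, sub_zero] at this
                exact this
          _ = _ := one_mul _
    _ = (Real.log u)^(m+1) / (m+1).factorial := by
        rw [ENNReal.toReal_ofReal]
        have hlog : 0 ≤ Real.log u := Real.log_nonneg hu.le
        positivity

lemma abs_muk_le (m : ℕ) (u v : ℝ) (hu : 1 < u) :
    |muk (m+2) u v| ≤ u⁻¹ * ((Real.log u)^(m+1) / (m+1).factorial) := by
  have hu0 : (0:ℝ) < u := by linarith
  rw [muk, if_neg (by omega : ¬ (m+2 = 1)), abs_mul, abs_inv, abs_of_pos hu0]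
  exact mul_le_mul_of_nonneg_left (abs_integral_Vk_le m u v hu) (by positivity)

lemma muk_one_nonneg (u v : ℝ) (hu : 0 < u) : 0 ≤ muk 1 u v := by
  rw [muk, if_pos rfl]
  exact mul_nonneg (by positivity) ENNReal.toReal_nonneg

lemma muk_one_le_inv (u v : ℝ) (hu : 0 < u) : muk 1 u v ≤ u⁻¹ := by
  rw [muk, if_pos rfl]
  have h1 : volume (Set.Ioo (0:ℝ) 1 ∩ Set.Ioo (u-1) (u-v)) ≤ volume (Set.Ioo (0:ℝ) 1) :=
    measure_mono Set.inter_subset_left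
  have h2 : (volume (Set.Ioo (0:ℝ) 1 ∩ Set.Ioo (u-1) (u-v))).toReal ≤ 1 := by
    have := ENNReal.toReal_mono (by simp [Real.volume_Ioo] : volume (Set.Ioo (0:ℝ) 1) ≠ ⊤) h1
    simpa [Real.volume_Ioo] using this
  calc u⁻¹ * (volume (Set.Ioo (0:ℝ) 1 ∩ Set.Ioo (u-1) (u-v))).toReal
      ≤ u⁻¹ * 1 := mul_le_mul_of_nonneg_left h2 (by positivity)
    _ = u⁻¹ := mul_one _

lemma muk_one_le_one (u v : ℝ) (hu : 0 < u) (hv0 : 0 ≤ v) (hvu : v < u) : muk 1 u v ≤ 1 := by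
  rw [muk, if_pos rfl]
  have hsub : Set.Ioo (0:ℝ) 1 ∩ Set.Ioo (u-1) (u-v) ⊆ Set.Ioo 0 (u-v) := by
    rintro x ⟨⟨hx0, -⟩, ⟨-, hx2⟩⟩
    exact ⟨hx0, hx2⟩
  have h2 : (volume (Set.Ioo (0:ℝ) 1 ∩ Set.Ioo (u-1) (u-v))).toReal ≤ u - v := by
    have := ENNReal.toReal_mono
      (by simp [Real.volume_Ioo] : volume (Set.Ioo (0:ℝ) (u-v)) ≠ ⊤)
      (measure_mono (μ := (volume : Measure ℝ)) hsub)
    rw [Real.volume_Ioo, ENNReal.toReal_ofReal (by linarith)] at this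
    simpa using this
  calc u⁻¹ * (volume (Set.Ioo (0:ℝ) 1 ∩ Set.Ioo (u-1) (u-v))).toReal
      ≤ u⁻¹ * u := by
        apply mul_le_mul_of_nonneg_left _ (by positivity)
        linarith
    _ = 1 := inv_mul_cancel₀ hu.ne'

lemma Vk_empty (k : ℕ) (u v : ℝ) (hk : 2 ≤ k) (hu : u ≤ 1) : Vk k u v = ∅ := by
  ext t
  simp only [Vk, Set.mem_setOf_eq, Set.mem_empty_iff_false, iff_false]
  rintro ⟨h1, h2, -⟩
  have h3 : (0:ℝ) ≤ ∑ i ∈ Finset.univ.filter (fun i : Fin k => (i : ℕ) < k - 1), t i :=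
    Finset.sum_nonneg fun i _ => (h1 i).1.le
  linarith

lemma muk_eq_zero (k : ℕ) (u v : ℝ) (hk : 2 ≤ k) (hu : u ≤ 1) : muk k u v = 0 := by
  rw [muk, if_neg (by omega : ¬ (k = 1)), Vk_empty k u v hk hu]
  simp

lemma two_mul_le_exp {s : ℝ} (hs : 0 ≤ s) : 2 * s ≤ Real.exp s := by
  have h1 := Real.add_one_le_exp (s/2)
  have h2 : Real.exp s = Real.exp (s/2) * Real.exp (s/2) := by
    rw [← Real.exp_add]; ring_nf
  nlinarith [Real.exp_pos (s/2), sq_nonneg (1 - s/2)]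


end MuAux

open MuAux in
/-- Convergence and bounds for `∑_{k≥1} κ^k μ_k(u,v)` (Proposition 3.3). -/
theorem mukappa_summable_and_bounds (u v κ : ℝ) (hu : 0 < u) (hv0 : 0 ≤ v)
    (hv : v < min 1 u) (hκ : 0 < κ) :
    Summable (fun k : ℕ => κ ^ (k+1) * muk (k+1) u v) ∧
    (u ≤ 1 → (∑' k : ℕ, κ ^ (k+1) * muk (k+1) u v) ≤ κ) ∧
    (1 < u → (∑' k : ℕ, κ ^ (k+1) * muk (k+1) u v) ≤ (1 + u) ^ κ) := by
  have hvu : v < u := lt_of_lt_of_le hv (min_le_right _ _)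
  rcases le_or_gt u 1 with hu1 | hu1
  · -- case u ≤ 1
    have hzero : ∀ k : ℕ, k ∉ ({0} : Finset ℕ) → κ ^ (k+1) * muk (k+1) u v = 0 := by
      intro k hk
      have hk1 : 2 ≤ k + 1 := by
        simp only [Finset.mem_singleton] at hk
        omega
      rw [muk_eq_zero (k+1) u v hk1 hu1, mul_zero]
    have hsum : Summable (fun k : ℕ => κ ^ (k+1) * muk (k+1) u v) :=
      summable_of_ne_finset_zero hzero
    refine ⟨hsum, fun _ => ?_, fun h => absurd h (not_lt.2 hu1)⟩
    rw [tsum_eq_sum hzero]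
    simp only [Finset.sum_singleton, zero_add, pow_one]
    calc κ * muk 1 u v ≤ κ * 1 :=
          mul_le_mul_of_nonneg_left (muk_one_le_one u v hu hv0 hvu) hκ.le
      _ = κ := mul_one _
  · -- case 1 < u
    set b : ℕ → ℝ := fun k => (κ * u⁻¹) * ((κ * Real.log u)^k / k.factorial) with hb
    have hlogu : 0 < Real.log u := Real.log_pos hu1
    have hbound : ∀ k : ℕ, ‖κ ^ (k+1) * muk (k+1) u v‖ ≤ b k := by
      intro k
      rw [Real.norm_eq_abs, abs_mul, abs_pow, abs_of_pos hκ]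
      cases k with
      | zero =>
        simp only [zero_add, pow_one, hb]
        have := muk_one_le_inv u v hu
        have h0 := muk_one_nonneg u v hu
        rw [abs_of_nonneg h0]
        calc κ * muk 1 u v ≤ κ * u⁻¹ := mul_le_mul_of_nonneg_left this hκ.le
          _ = (κ * u⁻¹) * ((κ * Real.log u)^0 / Nat.factorial 0) := by simp
      | succ n =>
        have h1 := abs_muk_le n u v hu1
        calc κ ^ (n+2) * |muk (n+2) u v|
            ≤ κ ^ (n+2) * (u⁻¹ * ((Real.log u)^(n+1) / (n+1).factorial)) :=
              mul_le_mul_of_nonneg_left h1 (by positivity)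
          _ = b (n+1) := by
              rw [hb]
              simp only [mul_pow]
              field_simp
              ring
    have hsb : Summable b :=
      (Real.summable_pow_div_factorial (κ * Real.log u)).mul_left _
    have hsum : Summable (fun k : ℕ => κ ^ (k+1) * muk (k+1) u v) :=
      Summable.of_norm_bounded hsb hbound
    refine ⟨hsum, fun h => absurd hu1 (not_lt.2 h), fun _ => ?_⟩
    have htsum_b : ∑' k, b k = (κ * u⁻¹) * Real.exp (κ * Real.log u) := by
      rw [hb, tsum_mul_left]
      congr 1
      rw [Real.exp_eq_exp_ℝ, NormedSpace.exp_eq_tsum_div]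
    have hstep : (∑' k : ℕ, κ ^ (k+1) * muk (k+1) u v) ≤ ∑' k, b k := by
      apply hsum.tsum_le_tsum _ hsb
      intro k
      exact le_trans (le_abs_self _) (hbound k)
    rw [htsum_b] at hstep
    refine le_trans hstep ?_
    -- κ * u⁻¹ * exp(κ log u) ≤ (1+u)^κ
    have h1u : (0:ℝ) < 1 + u := by linarith
    rw [Real.rpow_def_of_pos h1u]
    have hd : 1/(1+u) ≤ Real.log (1+u) - Real.log u := by
      have h2 : Real.log (u/(1+u)) ≤ u/(1+u) - 1 := Real.log_le_sub_one_of_pos (by positivity)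
      rw [Real.log_div (by positivity) (by positivity)] at h2
      have h3 : u/(1+u) - 1 = -(1/(1+u)) := by field_simp; ring
      rw [h3] at h2
      linarith
    set s : ℝ := κ / (1+u) with hs
    have hs0 : 0 < s := by positivity
    have hexp1 : κ / u ≤ Real.exp s := by
      have h4 : κ / u ≤ 2 * s := by
        rw [hs, mul_div_assoc']
        rw [div_le_div_iff₀ hu h1u]
        nlinarith [mul_nonneg hκ.le (by linarith : (0:ℝ) ≤ u - 1)]
      exact le_trans h4 (two_mul_le_exp hs0.le)
    have hfin : κ * u⁻¹ * Real.exp (κ * Real.log u)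
        ≤ Real.exp (Real.log (1+u) * κ) := by
      have h5 : Real.exp (Real.log (1+u) * κ)
          = Real.exp (κ * (Real.log (1+u) - Real.log u)) * Real.exp (κ * Real.log u) := by
        rw [← Real.exp_add]; ring_nf
      rw [h5]
      apply mul_le_mul_of_nonneg_right _ (Real.exp_pos _).le
      have h6 : Real.exp s ≤ Real.exp (κ * (Real.log (1+u) - Real.log u)) := by
        apply Real.exp_le_exp.2
        rw [hs]
        calc κ / (1+u) = κ * (1/(1+u)) := by ring
          _ ≤ κ * (Real.log (1+u) - Real.log u) := mul_le_mul_of_nonneg_left hd hκ.le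
      calc κ * u⁻¹ = κ / u := by ring
        _ ≤ Real.exp s := hexp1
        _ ≤ _ := h6
    exact hfin
end

section
/- Let κ > 0, 0 < θ ≤ 1/2, and 1 < u < 1/(1−θ). Then ρ_{θ,κ}(u) = κ·(1 − (1−θ)u)·u^{κ−1}. -/
open MeasureTheory

/-- `ρ_{θ,κ}(u) = μ^{(κ)}(u, (1-θ)u)`. -/
noncomputable def rhotheta (θ κ u : ℝ) : ℝ := mukappa κ u ((1-θ)*u)


def Sp (m : ℕ) (x : ℝ) : Set (Fin m → ℝ) := {t | (∀ i, 0 < t i) ∧ ∑ i, t i < x}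

noncomputable def Fp (m : ℕ) (u : ℝ) (t : Fin m → ℝ) : ℝ :=
  ∏ j : Fin m, (u - ∑ i ∈ Finset.univ.filter (fun i : Fin m => i ≤ j), t i)⁻¹

lemma measurableSet_Sp (m : ℕ) (x : ℝ) : MeasurableSet (Sp m x) := by
  have : Sp m x = (⋂ i, {t : Fin m → ℝ | 0 < t i}) ∩ {t | ∑ i, t i < x} := by
    ext t; simp [Sp, Set.mem_iInter]
  rw [this]
  exact (MeasurableSet.iInter fun i =>
      measurableSet_lt measurable_const (measurable_pi_apply i)).inter
    (measurableSet_lt (Finset.measurable_sum _ fun i _ => measurable_pi_apply i) measurable_const)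

lemma measurable_Fp (m : ℕ) (u : ℝ) : Measurable (Fp m u) :=
  Finset.measurable_prod _ fun _ _ =>
    ((measurable_const.sub (Finset.measurable_sum _ fun i _ => measurable_pi_apply i)).inv)
lemma norm_prod_inv_le_one {k : ℕ} {u : ℝ} (s : Finset (Fin k)) (g : Fin k → ℝ)
    (h : ∀ j ∈ s, 1 ≤ u - g j) : ‖∏ j ∈ s, (u - g j)⁻¹‖ ≤ 1 := by
  rw [Real.norm_eq_abs, Finset.abs_prod]
  apply Finset.prod_le_one (fun j _ => abs_nonneg _)
  intro j hj
  rw [abs_inv]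
  exact inv_le_one_of_one_le₀ ((h j hj).trans (le_abs_self _))

lemma Sp_subset_pi (m : ℕ) (x : ℝ) : Sp m x ⊆ Set.pi Set.univ (fun _ : Fin m => Set.Ioo 0 x) := by
  intro t ht i _
  exact ⟨ht.1 i, lt_of_le_of_lt
    (Finset.single_le_sum (fun i _ => (ht.1 i).le) (Finset.mem_univ i)) ht.2⟩

lemma volume_Sp_ne_top (m : ℕ) (x : ℝ) : volume (Sp m x) ≠ ⊤ := by
  refine ne_top_of_le_ne_top ?_ (measure_mono (Sp_subset_pi m x))
  rw [volume_pi_pi]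
  exact (ENNReal.prod_lt_top fun i _ => (by simp : volume (Set.Ioo (0:ℝ) x) ≠ ⊤).lt_top).ne

lemma norm_Fp_le_one {m : ℕ} {u x : ℝ} (hx : x ≤ u - 1) {t : Fin m → ℝ} (ht : t ∈ Sp m x) :
    ‖Fp m u t‖ ≤ 1 := by
  apply norm_prod_inv_le_one
  intro j _
  have h1 : ∑ i ∈ Finset.univ.filter (fun i : Fin m => i ≤ j), t i ≤ ∑ i, t i := by
    apply Finset.sum_le_sum_of_subset_of_nonneg (Finset.filter_subset _ _)
    intro i _ _; exact (ht.1 i).le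
  have h2 := ht.2
  linarith
lemma sum_filter_le_cons {m : ℕ} (a : ℝ) (t : Fin m → ℝ) (j : Fin m) :
    ∑ i ∈ Finset.univ.filter (fun i : Fin (m+1) => i ≤ j.succ), Fin.cons a t i
      = a + ∑ i ∈ Finset.univ.filter (fun i : Fin m => i ≤ j), t i := by
  rw [Finset.sum_filter, Finset.sum_filter, Fin.sum_univ_succ]
  simp [Fin.succ_le_succ_iff, Fin.zero_le]

lemma sum_filter_le_cons_zero {m : ℕ} (a : ℝ) (t : Fin m → ℝ) :
    ∑ i ∈ Finset.univ.filter (fun i : Fin (m+1) => i ≤ 0), Fin.cons a t i = a := by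
  rw [Finset.sum_filter, Fin.sum_univ_succ]
  simp [Fin.le_zero_iff, Fin.succ_ne_zero]

lemma Fp_cons {m : ℕ} (u a : ℝ) (t : Fin m → ℝ) :
    Fp (m+1) u (Fin.cons a t) = (u - a)⁻¹ * Fp m (u - a) t := by
  unfold Fp
  rw [Fin.prod_univ_succ, sum_filter_le_cons_zero]
  congr 1
  apply Finset.prod_congr rfl
  intro j _
  rw [sum_filter_le_cons, sub_add_eq_sub_sub]

lemma sum_cons' {m : ℕ} (a : ℝ) (t : Fin m → ℝ) :
    ∑ i, Fin.cons a t i = a + ∑ i, t i := by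
  rw [Fin.sum_univ_succ]; simp

-- snoc side
lemma sum_filter_lt_snoc {k : ℕ} (t : Fin k → ℝ) (a : ℝ) :
    ∑ i ∈ Finset.univ.filter (fun i : Fin (k+1) => (i : ℕ) < (k+1) - 1), Fin.snoc t a i
      = ∑ i, t i := by
  rw [Finset.sum_filter, Fin.sum_univ_castSucc]
  simp [Fin.is_lt]

lemma sum_filter_le_snoc {k : ℕ} (t : Fin k → ℝ) (a : ℝ) (j : Fin k) :
    ∑ i ∈ Finset.univ.filter (fun i : Fin (k+1) => i ≤ Fin.castSucc j), Fin.snoc t a i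
      = ∑ i ∈ Finset.univ.filter (fun i : Fin k => i ≤ j), t i := by
  rw [Finset.sum_filter, Finset.sum_filter, Fin.sum_univ_castSucc]
  simp [Fin.castSucc_le_castSucc_iff, (Fin.castSucc_lt_last j).not_ge]

lemma sum_univ_snoc {k : ℕ} (t : Fin k → ℝ) (a : ℝ) :
    ∑ i, Fin.snoc t a i = ∑ i, t i + a := by
  rw [Fin.sum_univ_castSucc]; simp

lemma prod_filter_snoc {k : ℕ} (u : ℝ) (t : Fin k → ℝ) (a : ℝ) :
    ∏ j ∈ Finset.univ.filter (fun j : Fin (k+1) => (j : ℕ) < (k+1) - 1),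
        (u - ∑ i ∈ Finset.univ.filter (fun i : Fin (k+1) => i ≤ j), Fin.snoc t a i)⁻¹
      = Fp k u t := by
  rw [Finset.prod_filter, Fin.prod_univ_castSucc]
  simp [Fp, sum_filter_le_snoc, Fin.is_lt]
lemma calc1 (m : ℕ) (u : ℝ) (hu : 1 < u) :
    ∫ a in Set.Ioo (0:ℝ) (u-1), (u-a)⁻¹ * ((Real.log (u-a))^m / m.factorial)
      = (Real.log u)^(m+1) / (m+1).factorial := by
  have h01 : (0:ℝ) ≤ u - 1 := by linarith
  have hpos : ∀ x ∈ Set.uIcc (0:ℝ) (u-1), 0 < u - x := by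
    intro x hx
    rw [Set.uIcc_of_le h01] at hx
    have := hx.2; linarith
  have hcont : ContinuousOn (fun a : ℝ => (u-a)⁻¹ * ((Real.log (u-a))^m / m.factorial))
      (Set.uIcc (0:ℝ) (u-1)) := by
    have hsub : ContinuousOn (fun a : ℝ => u - a) (Set.uIcc (0:ℝ) (u-1)) :=
      (continuousOn_const.sub continuousOn_id)
    exact (hsub.inv₀ fun x hx => (hpos x hx).ne').mul
      (((hsub.log fun x hx => (hpos x hx).ne').pow m).div_const _)
  have key : ∫ a in (0:ℝ)..(u-1), (u-a)⁻¹ * ((Real.log (u-a))^m / m.factorial)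
      = (Real.log u)^(m+1) / (m+1).factorial := by
    have hderiv : ∀ x ∈ Set.uIcc (0:ℝ) (u-1),
        HasDerivAt (fun a : ℝ => -(Real.log (u-a))^(m+1) / (m+1).factorial)
          ((u-x)⁻¹ * ((Real.log (u-x))^m / m.factorial)) x := by
      intro x hx
      have h1 : HasDerivAt (fun a : ℝ => u - a) (-1) x := by
        simpa using (hasDerivAt_id x).const_sub u
      have h2 : HasDerivAt (fun a : ℝ => Real.log (u - a)) (-(u-x)⁻¹) x := by
        have := (Real.hasDerivAt_log (hpos x hx).ne').comp x h1
        simp only [mul_neg, mul_one] at this; exact this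
      have h3 : HasDerivAt (fun a : ℝ => (Real.log (u-a))^(m+1))
          ((m+1) * (Real.log (u-x))^m * (-(u-x)⁻¹)) x := by
        have h := h2.pow (m+1)
        simp only [Nat.cast_add, Nat.cast_one, Nat.add_sub_cancel] at h; exact h
      have h4 := (h3.neg).div_const ((m+1).factorial : ℝ)
      refine HasDerivAt.congr_deriv h4 ?_
      have hfac : ((m+1).factorial : ℝ) = (m+1) * m.factorial := by
        rw [Nat.factorial_succ]; push_cast; ring
      rw [hfac]
      have hm : (m.factorial : ℝ) ≠ 0 := Nat.cast_ne_zero.2 m.factorial_ne_zero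
      have hux : u - x ≠ 0 := (hpos x hx).ne'
      field_simp
    rw [intervalIntegral.integral_eq_sub_of_hasDerivAt hderiv
      hcont.intervalIntegrable]
    have h1 : u - (u - 1) = 1 := by ring
    rw [h1, Real.log_one, zero_pow (Nat.succ_ne_zero m)]
    ring
  rw [← MeasureTheory.integral_Ioc_eq_integral_Ioo, ← intervalIntegral.integral_of_le h01]
  exact key

lemma integrableOn_Fp (m : ℕ) (u x : ℝ) (hx : x ≤ u - 1) :
    IntegrableOn (Fp m u) (Sp m x) := by
  apply Measure.integrableOn_of_bounded (volume_Sp_ne_top m x)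
    (measurable_Fp m u).aestronglyMeasurable (M := 1)
  filter_upwards [ae_restrict_mem (measurableSet_Sp m x)] with t ht
  exact norm_Fp_le_one hx ht

lemma inner_key (m : ℕ) (u : ℝ)
    (ih : ∀ u : ℝ, 1 < u → ∫ t in Sp m (u-1), Fp m u t = (Real.log u) ^ m / m.factorial)
    (a : ℝ) :
    ∫ t' : Fin m → ℝ, ((Sp (m+1) (u-1)).indicator (Fp (m+1) u)) (Fin.cons a t')
      = (Set.Ioo (0:ℝ) (u-1)).indicator
          (fun a => (u-a)⁻¹ * ((Real.log (u-a))^m / m.factorial)) a := by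
  have hmem : ∀ t' : Fin m → ℝ,
      (Fin.cons a t' ∈ Sp (m+1) (u-1)) ↔ (0 < a ∧ t' ∈ Sp m ((u-a)-1)) := by
    intro t'
    simp only [Sp, Set.mem_setOf_eq, sum_cons']
    constructor
    · rintro ⟨h1, h2⟩
      refine ⟨by simpa using h1 0, fun i => by simpa using h1 i.succ, by linarith⟩
    · rintro ⟨h0, h1, h2⟩
      refine ⟨fun i => ?_, by linarith⟩
      refine Fin.cases ?_ ?_ i
      · simpa using h0
      · intro i₀; simpa using h1 i₀
  by_cases ha : 0 < a
  · have heq : (fun t' : Fin m → ℝ => ((Sp (m+1) (u-1)).indicator (Fp (m+1) u)) (Fin.cons a t'))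
        = (Sp m ((u-a)-1)).indicator (fun t' => (u-a)⁻¹ * Fp m (u-a) t') := by
      funext t'
      by_cases ht : t' ∈ Sp m ((u-a)-1)
      · rw [Set.indicator_of_mem ((hmem t').2 ⟨ha, ht⟩) _, Set.indicator_of_mem ht, Fp_cons]
      · rw [Set.indicator_of_notMem (fun hc => ht ((hmem t').1 hc).2) _,
          Set.indicator_of_notMem ht]
    rw [heq]
    by_cases ha2 : a < u - 1
    · have hmemIoo : a ∈ Set.Ioo (0:ℝ) (u-1) := ⟨ha, ha2⟩
      rw [integral_indicator (measurableSet_Sp _ _), MeasureTheory.integral_const_mul,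
        ih (u-a) (by linarith), Set.indicator_of_mem hmemIoo]
    · have hempty : Sp m ((u-a)-1) = ∅ := by
        ext t; simp only [Sp, Set.mem_setOf_eq, Set.mem_empty_iff_false, iff_false, not_and]
        intro h1 h2
        have h3 : 0 ≤ ∑ i, t i := Finset.sum_nonneg fun i _ => (h1 i).le
        push_neg at ha2
        linarith [h2, h3]
      rw [hempty, Set.indicator_empty, integral_zero,
        Set.indicator_of_notMem (fun hc => ha2 hc.2) _]
  · have heq0 : (fun t' : Fin m → ℝ =>
        ((Sp (m+1) (u-1)).indicator (Fp (m+1) u)) (Fin.cons a t')) = fun _ => 0 := by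
      funext t'
      exact Set.indicator_of_notMem (fun hc => ha ((hmem t').1 hc).1) _
    rw [heq0, integral_zero, Set.indicator_of_notMem (fun hc => ha hc.1) _]

lemma key : ∀ (m : ℕ) (u : ℝ), 1 < u →
    ∫ t in Sp m (u-1), Fp m u t = (Real.log u) ^ m / m.factorial := by
  intro m
  induction m with
  | zero =>
    intro u hu
    have h1 : Sp 0 (u-1) = Set.univ := by
      ext t
      simp only [Sp, Set.mem_setOf_eq, Set.mem_univ, iff_true]
      exact ⟨fun i => i.elim0, by simp only [Finset.univ_eq_empty, Finset.sum_empty]; linarith⟩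
    have h2 : ∀ t : Fin 0 → ℝ, Fp 0 u t = 1 := fun t => by simp [Fp]
    rw [h1, Measure.restrict_univ]
    rw [integral_congr_ae (Filter.Eventually.of_forall h2), integral_const]
    have h3 : volume (Set.univ : Set (Fin 0 → ℝ)) = 1 := by
      rw [volume_pi, Measure.pi_univ]
      simp
    rw [measureReal_def, h3]
    simp
  | succ m ih =>
    intro u hu
    have hS : MeasurableSet (Sp (m+1) (u-1)) := measurableSet_Sp _ _
    have hGint : Integrable ((Sp (m+1) (u-1)).indicator (Fp (m+1) u)) :=
      (integrable_indicator_iff hS).2 (integrableOn_Fp (m+1) u (u-1) le_rfl)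
    have mp := measurePreserving_piFinSuccAbove (fun _ : Fin (m+1) => (volume : Measure ℝ)) 0
    rw [← integral_indicator hS]
    rw [show (volume : Measure (Fin (m+1) → ℝ)) = Measure.pi fun _ => volume from volume_pi,
      ← (mp.symm (MeasurableEquiv.piFinSuccAbove (fun _ : Fin (m+1) => ℝ) 0)).integral_comp']
    have hsymm : ∀ p : ℝ × (Fin m → ℝ),
        (MeasurableEquiv.piFinSuccAbove (fun _ : Fin (m+1) => ℝ) 0).symm p
          = Fin.cons p.1 p.2 := by
      intro p
      simp [MeasurableEquiv.piFinSuccAbove_symm_apply, Fin.insertNthEquiv, Fin.insertNth_zero']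
    have hint2 : Integrable (fun p : ℝ × (Fin m → ℝ) =>
        ((Sp (m+1) (u-1)).indicator (Fp (m+1) u))
          ((MeasurableEquiv.piFinSuccAbove (fun _ : Fin (m+1) => ℝ) 0).symm p))
        ((volume : Measure ℝ).prod (Measure.pi fun _ => volume)) := by
      exact (MeasurePreserving.integrable_comp_emb
        (g := (Sp (m+1) (u-1)).indicator (Fp (m+1) u))
        (mp.symm (MeasurableEquiv.piFinSuccAbove (fun _ : Fin (m+1) => ℝ) 0))
        (MeasurableEquiv.measurableEmbedding _)).2 (by
        rw [show (Measure.pi fun _ : Fin (m+1) => (volume : Measure ℝ)) = volume from volume_pi.symm]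
        exact hGint)
    rw [MeasureTheory.integral_prod _ hint2]
    simp_rw [hsymm]
    rw [show (Measure.pi fun _ : Fin m => (volume : Measure ℝ)) = volume from volume_pi.symm]
    rw [integral_congr_ae (Filter.Eventually.of_forall (inner_key m u ih))]
    rw [integral_indicator measurableSet_Ioo, calc1 m u hu]

lemma mem_Vk_snoc {k : ℕ} {u v : ℝ} (h1 : 1 < u) (h2 : u < 2) (h3 : u - v < 1) (h4 : v < 1)
    (t : Fin k → ℝ) (a : ℝ) :
    Fin.snoc t a ∈ Vk (k+1) u v ↔
      (t ∈ Sp k (u-1) ∧ a ∈ Set.Ioo (u - 1 - ∑ i, t i) (u - v - ∑ i, t i)) := by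
  unfold Vk Sp
  simp only [Set.mem_setOf_eq, Set.mem_Ioo, sum_filter_lt_snoc, sum_univ_snoc]
  constructor
  · rintro ⟨hio, hlt, h5, h6⟩
    have hpos : ∀ i, 0 < t i := fun i => by
      have := hio (Fin.castSucc i); rw [Fin.snoc_castSucc] at this; exact this.1
    exact ⟨⟨hpos, hlt⟩, by linarith, by linarith⟩
  · rintro ⟨⟨hpos, hlt⟩, ha1, ha2⟩
    have hnn : 0 ≤ ∑ i, t i := Finset.sum_nonneg fun i _ => (hpos i).le
    refine ⟨?_, hlt, by linarith, by linarith⟩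
    intro i
    refine Fin.lastCases ?_ ?_ i
    · rw [Fin.snoc_last]; exact ⟨by linarith, by linarith⟩
    · intro i₀
      rw [Fin.snoc_castSucc]
      have hle : t i₀ ≤ ∑ i, t i :=
        Finset.single_le_sum (fun i _ => (hpos i).le) (Finset.mem_univ i₀)
      exact ⟨hpos i₀, by linarith⟩

lemma volume_Vk_ne_top (k : ℕ) (u v : ℝ) : volume (Vk k u v) ≠ ⊤ := by
  have hsub : Vk k u v ⊆ Set.pi Set.univ (fun _ : Fin k => Set.Ioo (0:ℝ) 1) :=
    fun t ht i _ => ht.1 i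
  refine ne_top_of_le_ne_top ?_ (measure_mono hsub)
  rw [volume_pi_pi]
  exact (ENNReal.prod_lt_top fun i _ =>
    (by simp : volume (Set.Ioo (0:ℝ) 1) ≠ ⊤).lt_top).ne

lemma norm_Pk_le_one {k : ℕ} {u v : ℝ} {t : Fin k → ℝ} (ht : t ∈ Vk k u v) (h1 : 1 < u) :
    ‖Pk k u t‖ ≤ 1 := by
  apply norm_prod_inv_le_one
  intro j hj
  rw [Finset.mem_filter] at hj
  have hsub : Finset.univ.filter (fun i : Fin k => i ≤ j)
      ⊆ Finset.univ.filter (fun i : Fin k => (i : ℕ) < k - 1) := by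
    intro i hi
    rw [Finset.mem_filter] at hi ⊢
    exact ⟨hi.1, lt_of_le_of_lt hi.2 hj.2⟩
  have hle : ∑ i ∈ Finset.univ.filter (fun i : Fin k => i ≤ j), t i
      ≤ ∑ i ∈ Finset.univ.filter (fun i : Fin k => (i : ℕ) < k - 1), t i := by
    apply Finset.sum_le_sum_of_subset_of_nonneg hsub
    intro i _ _; exact (ht.1 i).1.le
  have h2 := ht.2.1
  linarith

lemma integrableOn_Pk {k : ℕ} {u v : ℝ} (h1 : 1 < u) :
    IntegrableOn (Pk k u) (Vk k u v) := by
  apply Measure.integrableOn_of_bounded (volume_Vk_ne_top k u v)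
    (measurable_Pk k u).aestronglyMeasurable (M := 1)
  filter_upwards [ae_restrict_mem (measurableSet_Vk k u v)] with t ht
  exact norm_Pk_le_one ht h1

lemma Pk_snoc {k : ℕ} (u : ℝ) (t : Fin k → ℝ) (a : ℝ) :
    Pk (k+1) u (Fin.snoc t a) = Fp k u t := by
  unfold Pk
  exact prod_filter_snoc u t a

lemma inner_Vk (k : ℕ) (u v : ℝ) (h1 : 1 < u) (h2 : u < 2) (h3 : u - v < 1) (h4 : v < 1)
    (t' : Fin k → ℝ) :
    ∫ a : ℝ, ((Vk (k+1) u v).indicator (Pk (k+1) u)) (Fin.snoc t' a)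
      = (Sp k (u-1)).indicator (fun t' => (1 - v) * Fp k u t') t' := by
  by_cases ht : t' ∈ Sp k (u-1)
  · have heq : (fun a : ℝ => ((Vk (k+1) u v).indicator (Pk (k+1) u)) (Fin.snoc t' a))
        = (Set.Ioo (u - 1 - ∑ i, t' i) (u - v - ∑ i, t' i)).indicator
            (fun _ => Fp k u t') := by
      funext a
      by_cases ha : a ∈ Set.Ioo (u - 1 - ∑ i, t' i) (u - v - ∑ i, t' i)
      · rw [Set.indicator_of_mem ((mem_Vk_snoc h1 h2 h3 h4 t' a).2 ⟨ht, ha⟩) _,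
          Set.indicator_of_mem ha, Pk_snoc]
      · rw [Set.indicator_of_notMem
            (fun hc => ha ((mem_Vk_snoc h1 h2 h3 h4 t' a).1 hc).2) _,
          Set.indicator_of_notMem ha]
    rw [heq, integral_indicator_const _ measurableSet_Ioo, Set.indicator_of_mem ht,
      measureReal_def, Real.volume_Ioo, show u - v - ∑ i, t' i - (u - 1 - ∑ i, t' i) = 1 - v by ring,
      ENNReal.toReal_ofReal (by linarith), smul_eq_mul]
  · have heq0 : (fun a : ℝ => ((Vk (k+1) u v).indicator (Pk (k+1) u)) (Fin.snoc t' a))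
        = fun _ => 0 := by
      funext a
      exact Set.indicator_of_notMem
        (fun hc => ht ((mem_Vk_snoc h1 h2 h3 h4 t' a).1 hc).1) _
    rw [heq0, integral_zero, Set.indicator_of_notMem ht]

lemma Vk_integral (k : ℕ) (u v : ℝ) (h1 : 1 < u) (h2 : u < 2) (h3 : u - v < 1) (h4 : v < 1) :
    ∫ t in Vk (k+1) u v, Pk (k+1) u t
      = (1 - v) * ((Real.log u) ^ k / k.factorial) := by
  have hS : MeasurableSet (Vk (k+1) u v) := measurableSet_Vk _ _ _
  have hGint : Integrable ((Vk (k+1) u v).indicator (Pk (k+1) u)) :=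
    (integrable_indicator_iff hS).2 (integrableOn_Pk h1)
  have mp := measurePreserving_piFinSuccAbove
    (fun _ : Fin (k+1) => (volume : Measure ℝ)) (Fin.last k)
  rw [← integral_indicator hS]
  rw [show (volume : Measure (Fin (k+1) → ℝ)) = Measure.pi fun _ => volume from volume_pi,
    ← (mp.symm (MeasurableEquiv.piFinSuccAbove (fun _ : Fin (k+1) => ℝ) (Fin.last k))).integral_comp']
  have hsymm : ∀ p : ℝ × (Fin k → ℝ),
      (MeasurableEquiv.piFinSuccAbove (fun _ : Fin (k+1) => ℝ) (Fin.last k)).symm p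
        = Fin.snoc p.2 p.1 := by
    intro p
    simp [MeasurableEquiv.piFinSuccAbove_symm_apply, Fin.insertNthEquiv, Fin.insertNth_last']
  have hint2 : Integrable (fun p : ℝ × (Fin k → ℝ) =>
      ((Vk (k+1) u v).indicator (Pk (k+1) u))
        ((MeasurableEquiv.piFinSuccAbove (fun _ : Fin (k+1) => ℝ) (Fin.last k)).symm p))
      ((volume : Measure ℝ).prod (Measure.pi fun _ => volume)) :=
    (MeasurePreserving.integrable_comp_emb
      (g := (Vk (k+1) u v).indicator (Pk (k+1) u))
      (mp.symm (MeasurableEquiv.piFinSuccAbove (fun _ : Fin (k+1) => ℝ) (Fin.last k)))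
      (MeasurableEquiv.measurableEmbedding _)).2 (by
        rw [show (Measure.pi fun _ : Fin (k+1) => (volume : Measure ℝ)) = volume from
          volume_pi.symm]
        exact hGint)
  rw [MeasureTheory.integral_prod_symm _ hint2]
  simp_rw [hsymm]
  rw [show (Measure.pi fun _ : Fin k => (volume : Measure ℝ)) = volume from volume_pi.symm]
  rw [integral_congr_ae (Filter.Eventually.of_forall (inner_Vk k u v h1 h2 h3 h4))]
  rw [integral_indicator (measurableSet_Sp _ _), MeasureTheory.integral_const_mul,
    key k u h1]

lemma muk_eq_s13 (k : ℕ) (u v : ℝ) (h1 : 1 < u) (h2 : u < 2) (h3 : u - v < 1) (h4 : v < 1) :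
    muk (k+1) u v = u⁻¹ * ((1 - v) * ((Real.log u) ^ k / k.factorial)) := by
  cases k with
  | zero =>
    rw [muk, if_pos rfl]
    have hI : Set.Ioo (0:ℝ) 1 ∩ Set.Ioo (u-1) (u-v) = Set.Ioo (u-1) (u-v) := by
      rw [Set.Ioo_inter_Ioo, max_eq_right (by linarith), min_eq_right (by linarith)]
    rw [hI, Real.volume_Ioo, ENNReal.toReal_ofReal (by linarith)]
    norm_num
  | succ k' =>
    rw [muk, if_neg (by omega)]
    have hP : (∫ t in Vk (k'+2) u v,
        ∏ j ∈ Finset.univ.filter (fun j : Fin (k'+2) => (j : ℕ) < (k'+2) - 1),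
          (u - ∑ i ∈ Finset.univ.filter (fun i : Fin (k'+2) => i ≤ j), t i)⁻¹)
        = ∫ t in Vk (k'+2) u v, Pk (k'+2) u t := rfl
    rw [hP, Vk_integral (k'+1) u v h1 h2 h3 h4]


/-- Explicit value of `ρ_{θ,κ}` for `0 < θ ≤ 1/2` (Corollaire 3.5, (3.10)). -/
theorem rhotheta_value_theta_le_half (κ θ u : ℝ) (hκ : 0 < κ)
    (hθ0 : 0 < θ) (hθ : θ ≤ 1/2) (hu1 : 1 < u) (hu2 : u < 1 / (1 - θ)) :
    rhotheta θ κ u = κ * (1 - (1 - θ) * u) * u ^ (κ - 1) := by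
  have hθ1 : 0 < 1 - θ := by linarith
  set v := (1-θ)*u with hv
  have h4 : v < 1 := by
    have h := (lt_div_iff₀ hθ1).1 hu2
    rw [hv]; linarith
  have h2 : u < 2 := by
    have h12 : 1/(1-θ) ≤ 2 := by rw [div_le_iff₀ hθ1]; linarith
    linarith
  have h3 : u - v < 1 := by rw [hv]; nlinarith
  unfold rhotheta mukappa
  rw [← hv]
  have hterm : ∀ k : ℕ, κ ^ (k+1) * muk (k+1) u v
      = (κ * u⁻¹ * (1-v)) * ((κ * Real.log u) ^ k / k.factorial) := by
    intro k
    rw [muk_eq_s13 k u v hu1 h2 h3 h4, mul_pow, pow_succ]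
    ring
  rw [tsum_congr hterm, tsum_mul_left]
  have hexp : ∑' (k : ℕ), (κ * Real.log u) ^ k / (k.factorial : ℝ)
      = Real.exp (κ * Real.log u) := by
    rw [Real.exp_eq_exp_ℝ, NormedSpace.exp_eq_tsum_div]
  rw [hexp, show Real.exp (κ * Real.log u) = u ^ κ by
      rw [Real.rpow_def_of_pos (by linarith), mul_comm],
    Real.rpow_sub (by linarith : (0:ℝ) < u), Real.rpow_one]
  field_simp
end

section
/- Let 𝒜 be a finite nonempty set of positive integers, x := max 𝒜, and y ≥ 1 a real. Then Ψ_𝒜(y)·log x = ∫_1^x Ψ_{𝒜∩[1,t]}(y)·dt/t + ∑_{d ≤ x, P⁺(d) ≤ y} Λ(d)·Ψ_𝒜(y,d), where Λ is the von Mangoldt function. -/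
open scoped ArithmeticFunction

attribute [local instance] Classical.propDecidable

lemma Pplus_dvd_le {d n : ℕ} (hn : n ≠ 0) (h : d ∣ n) : Pplus d ≤ Pplus n :=
  max_le_max le_rfl (Finset.sup_mono (Nat.primeFactors_mono h hn))

/-- integrability of the truncated 1/t -/
lemma gInt {n : ℕ} {x : ℝ} (hx : 1 ≤ x) :
    IntervalIntegrable (fun t : ℝ => if (n : ℝ) ≤ t then 1 / t else 0) MeasureTheory.volume 1 x := by
  have h1 : IntervalIntegrable (fun t : ℝ => 1 / t) MeasureTheory.volume 1 x := by
    apply intervalIntegral.intervalIntegrable_one_div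
    · intro t ht
      rw [Set.uIcc_of_le hx] at ht
      linarith [ht.1]
    · fun_prop
  have : (fun t : ℝ => if (n : ℝ) ≤ t then 1 / t else 0)
      = Set.indicator (Set.Ici (n : ℝ)) (fun t : ℝ => 1 / t) := by
    funext t; simp [Set.indicator_apply, Set.mem_Ici]
  rw [this]
  exact ⟨h1.1.indicator measurableSet_Ici, h1.2.indicator measurableSet_Ici⟩

lemma gVal {n : ℕ} {x : ℝ} (hn : 1 ≤ (n : ℝ)) (hnx : (n : ℝ) ≤ x) :
    (∫ t in (1:ℝ)..x, if (n : ℝ) ≤ t then 1 / t else 0) = Real.log x - Real.log n := by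
  have hx : (1:ℝ) ≤ x := hn.trans hnx
  have hne : ∀ᵐ t : ℝ, t ≠ (n : ℝ) := by
    rw [MeasureTheory.ae_iff]
    simpa using Real.volume_singleton
  have hcongr : ∫ t in (1:ℝ)..x, (if (n : ℝ) ≤ t then 1 / t else 0)
      = ∫ t in (1:ℝ)..x, (1 / t - Set.indicator {s : ℝ | s ≤ (n : ℝ)} (fun s => 1 / s) t) := by
    apply intervalIntegral.integral_congr_ae
    filter_upwards [hne] with t ht _
    by_cases h : (n : ℝ) ≤ t
    · have : ¬ (t ≤ (n : ℝ)) := fun h' => ht (le_antisymm h' h)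
      simp [h, Set.indicator_apply, this]
    · have : t ≤ (n : ℝ) := le_of_not_ge h
      simp [h, Set.indicator_apply, this]
  have h1 : IntervalIntegrable (fun t : ℝ => 1 / t) MeasureTheory.volume 1 x := by
    apply intervalIntegral.intervalIntegrable_one_div
    · intro t ht
      rw [Set.uIcc_of_le hx] at ht
      linarith [ht.1]
    · fun_prop
  have h2 : IntervalIntegrable (Set.indicator {s : ℝ | s ≤ (n : ℝ)} (fun s => 1 / s))
      MeasureTheory.volume 1 x :=
    ⟨h1.1.indicator measurableSet_Iic, h1.2.indicator measurableSet_Iic⟩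
  rw [hcongr, intervalIntegral.integral_sub h1 h2]
  have hi : ∫ t in (1:ℝ)..x, Set.indicator {s : ℝ | s ≤ (n : ℝ)} (fun s => 1 / s) t
      = ∫ t in (1:ℝ)..(n : ℝ), 1 / t :=
    intervalIntegral.integral_indicator ⟨hn, hnx⟩
  rw [hi, integral_one_div_of_pos one_pos (by positivity), integral_one_div_of_pos one_pos
    (by linarith)]
  simp

/-- Generalized Hildebrand identity (Proposition 3.12, (3.16)). -/
theorem hildebrand_identity (𝒜 : Finset ℕ) (h𝒜 : 𝒜.Nonempty) (hpos : ∀ n ∈ 𝒜, 0 < n)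
    (y : ℝ) (hy : 1 ≤ y) :
    ((𝒜.filter (fun n => (Pplus n : ℝ) ≤ y)).card : ℝ) * Real.log (𝒜.max' h𝒜 : ℕ)
      = (∫ t in (1:ℝ)..((𝒜.max' h𝒜 : ℕ) : ℝ),
          ((𝒜.filter (fun (n : ℕ) => (n : ℝ) ≤ t ∧ (Pplus n : ℝ) ≤ y)).card : ℝ) / t)
        + ∑ d ∈ (Finset.Icc 1 (𝒜.max' h𝒜)).filter (fun d => (Pplus d : ℝ) ≤ y),
            (Λ d : ℝ) * ((𝒜.filter (fun n => (Pplus n : ℝ) ≤ y ∧ d ∣ n)).card : ℝ) := by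
  set x := 𝒜.max' h𝒜 with hxdef
  have hx1 : 1 ≤ x := hpos _ (𝒜.max'_mem h𝒜)
  have hmem_le : ∀ n ∈ 𝒜, n ≤ x := fun n hn => Finset.le_max' _ _ hn
  set S := 𝒜.filter (fun n => (Pplus n : ℝ) ≤ y) with hS
  -- the integrand as a finite sum
  have hInt : ∀ t : ℝ, ((𝒜.filter (fun (n : ℕ) => (n : ℝ) ≤ t ∧ (Pplus n : ℝ) ≤ y)).card : ℝ) / t
      = ∑ n ∈ S, (if (n : ℝ) ≤ t then 1 / t else 0) := by
    intro t
    have : 𝒜.filter (fun (n : ℕ) => (n : ℝ) ≤ t ∧ (Pplus n : ℝ) ≤ y)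
        = S.filter (fun n : ℕ => (n : ℝ) ≤ t) := by
      rw [hS, Finset.filter_filter]
      apply Finset.filter_congr
      intro n _
      exact and_comm
    rw [this, Finset.card_filter]
    push_cast
    rw [Finset.sum_div]
    apply Finset.sum_congr rfl
    intro n _
    split <;> simp
  simp only [hInt]
  rw [intervalIntegral.integral_finset_sum (fun n _ => gInt (by exact_mod_cast hx1))]
  have hmemS : ∀ n ∈ S, 0 < n ∧ n ≤ x ∧ (Pplus n : ℝ) ≤ y := by
    intro n hn
    rw [hS, Finset.mem_filter] at hn
    exact ⟨hpos _ hn.1, hmem_le _ hn.1, hn.2⟩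
  have hval : ∀ n ∈ S, (∫ t in (1:ℝ)..(x:ℝ), if (n : ℝ) ≤ t then 1 / t else 0)
      = Real.log x - Real.log n := by
    intro n hn
    obtain ⟨h1, h2, _⟩ := hmemS n hn
    exact gVal (by exact_mod_cast h1) (by exact_mod_cast h2)
  rw [Finset.sum_congr rfl hval]
  -- the von Mangoldt sum
  have hsum : ∑ d ∈ (Finset.Icc 1 x).filter (fun d => (Pplus d : ℝ) ≤ y),
      (Λ d : ℝ) * ((𝒜.filter (fun n => (Pplus n : ℝ) ≤ y ∧ d ∣ n)).card : ℝ)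
      = ∑ n ∈ S, Real.log n := by
    have hterm : ∀ d, (Λ d : ℝ) * ((𝒜.filter (fun n => (Pplus n : ℝ) ≤ y ∧ d ∣ n)).card : ℝ)
        = ∑ n ∈ S, (if d ∣ n then (Λ d : ℝ) else 0) := by
      intro d
      have : 𝒜.filter (fun n => (Pplus n : ℝ) ≤ y ∧ d ∣ n) = S.filter (fun n => d ∣ n) := by
        rw [hS, Finset.filter_filter]
      rw [this, Finset.card_filter]
      push_cast
      rw [Finset.mul_sum]
      apply Finset.sum_congr rfl
      intro n _
      split <;> simp
    rw [Finset.sum_congr rfl (fun d _ => hterm d), Finset.sum_comm]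
    apply Finset.sum_congr rfl
    intro n hn
    obtain ⟨hn0, hnx, hny⟩ := hmemS n hn
    rw [← Finset.sum_filter]
    have hdiv : ((Finset.Icc 1 x).filter (fun d => (Pplus d : ℝ) ≤ y)).filter (fun d => d ∣ n)
        = n.divisors := by
      ext d
      simp only [Finset.mem_filter, Finset.mem_Icc, Nat.mem_divisors]
      constructor
      · rintro ⟨⟨_, _⟩, hd⟩
        exact ⟨hd, hn0.ne'⟩
      · rintro ⟨hd, _⟩
        have hd0 : 0 < d := Nat.pos_of_dvd_of_pos hd hn0
        refine ⟨⟨⟨hd0, (Nat.le_of_dvd hn0 hd).trans hnx⟩, ?_⟩, hd⟩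
        calc (Pplus d : ℝ) ≤ (Pplus n : ℝ) := by exact_mod_cast Pplus_dvd_le hn0.ne' hd
          _ ≤ y := hny
    rw [hdiv, ArithmeticFunction.vonMangoldt_sum]
  rw [hsum, ← Finset.sum_add_distrib]
  simp only [sub_add_cancel]
  rw [Finset.sum_const, nsmul_eq_mul]
end
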